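/- arXiv:2412.00398 — 8 statements merged into one kernel-verified Lean document; each statement's English description precedes it below -/
import Mathlib

section
/- Let k be a finitely generated field and let G be a countable abelian group such that char k ∉ Sp(G). If the group algebra kG possesses a faithful maximal ideal which is finitely generated as an ideal, then G has finite total rank. -/
universe u v w

/-- A field is finitely generated (over its prime subfield). -/
def IsFGField (k : Type*) [Field k] : Prop :=
  ∃ s : Finset k, Subfield.closure (s : Set k) = ⊤

/-- The subgroup of elements of `p`-power order in an abelian group. -/
def primaryPart (A : Type*) [CommGroup A] (p : ℕ) : Subgroup A where
  carrier := {x | ∃ n : ℕ, x ^ p ^ n = 1}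
  one_mem' := ⟨0, one_pow _⟩
  mul_mem' := by
    rintro a b ⟨n, hn⟩ ⟨m, hm⟩
    refine ⟨n + m, ?_⟩
    rw [mul_pow, pow_add, pow_mul, hn, one_pow, one_mul, Nat.mul_comm, pow_mul, hm, one_pow]
  inv_mem' := by
    rintro a ⟨n, hn⟩
    exact ⟨n, by rw [inv_pow, hn, inv_one]⟩

/-- A group has finite Prüfer rank: there is `m` such that every finitely generated
subgroup can be generated by at most `m` elements. -/
def HasFinitePruferRank (G : Type*) [Group G] : Prop :=
  ∃ m : ℕ, ∀ H : Subgroup G, H.FG →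
    ∃ s : Finset G, ↑s ⊆ (H : Set G) ∧ s.card ≤ m ∧ Subgroup.closure (s : Set G) = H

/-- An abelian group has finite total rank. -/
def FiniteTotalRank (A : Type*) [CommGroup A] : Prop :=
  HasFinitePruferRank (A ⧸ CommGroup.torsion A) ∧
  {p : ℕ | p.Prime ∧ primaryPart A p ≠ ⊥}.Finite ∧
  ∀ p : ℕ, p.Prime → HasFinitePruferRank (primaryPart A p)

/-- `G` has an infinite `p`-section: subgroups `K ⊴ H ≤ G` with `H/K` an infinite `p`-group. -/
def HasInfinitePSection (G : Type*) [Group G] (p : ℕ) : Prop :=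
  ∃ (H : Subgroup G) (K : Subgroup ↥H) (_ : K.Normal),
    Infinite (↥H ⧸ K) ∧ ∀ x : ↥H ⧸ K, ∃ n : ℕ, x ^ p ^ n = 1

/-- `char k ∉ Sp(G)`: the characteristic of `k` is zero or a prime `p` such that `G`
has no infinite `p`-section. -/
def CharNotInSp (k : Type*) [Field k] (G : Type*) [Group G] : Prop :=
  ∀ p : ℕ, p.Prime → ringChar k = p → ¬ HasInfinitePSection G p

/-- A quasicyclic (Prüfer) group: an infinite locally cyclic `p`-group for some prime `p`. -/
def IsQuasicyclic (Q : Type*) [Group Q] : Prop :=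
  Infinite Q ∧ ∃ p : ℕ, p.Prime ∧ (∀ x : Q, ∃ n : ℕ, x ^ p ^ n = 1) ∧
    ∀ s : Finset Q, ∃ g : Q, Subgroup.closure (s : Set Q) = Subgroup.zpowers g

/-- A minimax group: it has a finite chain `⊥ = c 0 ≤ ⋯ ≤ c n = ⊤` of subgroups, each
normal in the next, all whose factors are cyclic or quasicyclic. -/
def IsMinimax (G : Type u) [Group G] : Prop :=
  ∃ (n : ℕ) (c : Fin (n + 1) → Subgroup G), c 0 = ⊥ ∧ c (Fin.last n) = ⊤ ∧
    (∀ i : Fin n, c i.castSucc ≤ c i.succ) ∧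
    ∀ i : Fin n, ∃ (A : Type u) (_ : Group A) (f : ↥(c i.succ) →* A),
      Function.Surjective f ∧ f.ker = (c i.castSucc).subgroupOf (c i.succ) ∧
      (IsCyclic A ∨ IsQuasicyclic A)

/-- A soluble FATR-group: it has a finite chain `⊥ = c 0 ≤ ⋯ ≤ c n = ⊤` of subgroups, each
normal in the next, all whose factors are abelian of finite total rank. -/
def IsFATRGroup (G : Type u) [Group G] : Prop :=
  ∃ (n : ℕ) (c : Fin (n + 1) → Subgroup G), c 0 = ⊥ ∧ c (Fin.last n) = ⊤ ∧
    (∀ i : Fin n, c i.castSucc ≤ c i.succ) ∧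
    ∀ i : Fin n, ∃ (A : Type u) (_ : CommGroup A) (f : ↥(c i.succ) →* A),
      Function.Surjective f ∧ f.ker = (c i.castSucc).subgroupOf (c i.succ) ∧
      FiniteTotalRank A

/-- Multiplication by a group element as a `k`-linear map on a `kG`-module. -/
noncomputable def gSmul (k : Type*) [Field k] {G : Type*} [Group G] (M : Type*) [AddCommGroup M]
    [Module (MonoidAlgebra k G) M] [Module k M] [IsScalarTower k (MonoidAlgebra k G) M]
    (g : G) : M →ₗ[k] M where
  toFun m := MonoidAlgebra.of k G g • m
  map_add' x y := smul_add _ x y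
  map_smul' c m := by
    simp only [RingHom.id_apply]
    rw [← algebraMap_smul (MonoidAlgebra k G) c m, ← mul_smul,
      ← Algebra.commutes c (MonoidAlgebra.of k G g), mul_smul, algebraMap_smul]

/-- `V` (a `kN`-invariant subspace of `M`) is induced from the `kH`-subspace `W`, where
`H ≤ N`: `V` is the internal direct sum `⊕_{t ∈ T} t • W` over a transversal `T ⊆ N`
of `H` in `N`. -/
def IsInducedFromSub (k : Type*) [Field k] {G : Type*} [Group G] (M : Type*) [AddCommGroup M]
    [Module (MonoidAlgebra k G) M] [Module k M] [IsScalarTower k (MonoidAlgebra k G) M]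
    (N : Subgroup G) (V : Submodule k M) (H : Subgroup G) (W : Submodule k M) : Prop :=
  H ≤ N ∧ W ≤ V ∧
  (∀ h ∈ H, ∀ w ∈ W, MonoidAlgebra.of k G h • w ∈ W) ∧
  ∃ T : Set G, T ⊆ (N : Set G) ∧
    (∀ g ∈ N, ∃! t, t ∈ T ∧ t⁻¹ * g ∈ H) ∧
    iSupIndep (fun t : T => W.map (gSmul k M (t : G))) ∧
    (⨆ t : T, W.map (gSmul k M (t : G))) = V

/-- The `kG`-module `M` is induced from the `kH`-subspace `U`. -/
def IsInducedFrom (k : Type*) [Field k] {G : Type*} [Group G] (M : Type*) [AddCommGroup M]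
    [Module (MonoidAlgebra k G) M] [Module k M] [IsScalarTower k (MonoidAlgebra k G) M]
    (H : Subgroup G) (U : Submodule k M) : Prop :=
  IsInducedFromSub k M ⊤ ⊤ H U

/-- The kernel of the action of a subgroup `N` on a subspace `V` of a `kG`-module. -/
noncomputable def moduleKer (k : Type*) [Field k] {G : Type*} [Group G] (M : Type*)
    [AddCommGroup M] [Module (MonoidAlgebra k G) M] [Module k M]
    [IsScalarTower k (MonoidAlgebra k G) M]
    (N : Subgroup G) (V : Submodule k M) : Subgroup N where
  carrier := {g | ∀ v ∈ V, MonoidAlgebra.of k G (g : G) • v = v}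
  one_mem' := by
    intro v _
    show MonoidAlgebra.of k G ((1 : N) : G) • v = v
    rw [OneMemClass.coe_one, map_one, one_smul]
  mul_mem' := by
    intro a b ha hb v hv
    show MonoidAlgebra.of k G ((a * b : N) : G) • v = v
    have : ((a * b : N) : G) = (a : G) * (b : G) := rfl
    rw [this, map_mul, mul_smul, hb v hv, ha v hv]
  inv_mem' := by
    intro a ha v hv
    show MonoidAlgebra.of k G ((a⁻¹ : N) : G) • v = v
    have h1 : MonoidAlgebra.of k G ((a : G)⁻¹ * (a : G)) • v = v := by
      rw [inv_mul_cancel, map_one, one_smul]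
    rw [map_mul, mul_smul, ha v hv] at h1
    exact h1

def Monoid.IsTorsionFree (G : Type*) [Monoid G] : Prop := ∀ g : G, g ≠ 1 → ¬IsOfFinOrder g

theorem Monoid.IsTorsionFree.quotient_torsion (G : Type*) [CommGroup G] :
    Monoid.IsTorsionFree (G ⧸ CommGroup.torsion G) :=
  fun _ hg hfin => hg hfin.eq_one'

theorem Monoid.IsTorsionFree.subgroup {G : Type*} [Group G] (htf : Monoid.IsTorsionFree G)
    (H : Subgroup G) : Monoid.IsTorsionFree ↥H :=
  fun x hx hfin => htf x (fun h => hx (Subtype.ext h)) (MonoidHom.isOfFinOrder H.subtype hfin)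

section Stmt7Aux

set_option linter.unusedSectionVars false

variable {k : Type*} [Field k] {G : Type*} [CommGroup G]

/-- Component of a monoid-algebra element along the fibre `q ⁻¹ b`. -/
noncomputable def fcomp {β : Type*} (q : G → β) (b : β) (x : MonoidAlgebra k G) :
    MonoidAlgebra k G :=
  MonoidAlgebra.ofCoeff (@Finsupp.filter G k _ (fun a => q a = b) (Classical.decPred _) x.coeff)

theorem fcomp_apply_pos {β : Type*} (q : G → β) (b : β) (x : MonoidAlgebra k G) {a : G}
    (h : q a = b) : (fcomp q b x).coeff a = x.coeff a := by
  classical simp [fcomp, Finsupp.filter_apply, h]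

theorem fcomp_apply_neg {β : Type*} (q : G → β) (b : β) (x : MonoidAlgebra k G) {a : G}
    (h : ¬ q a = b) : (fcomp q b x).coeff a = 0 := by
  classical simp [fcomp, Finsupp.filter_apply, h]

theorem fcomp_add {β : Type*} (q : G → β) (b : β) (x y : MonoidAlgebra k G) :
    fcomp q b (x + y) = fcomp q b x + fcomp q b y := by
  ext a
  have h1 : (fcomp q b x + fcomp q b y).coeff a = (fcomp q b x).coeff a + (fcomp q b y).coeff a := rfl
  have h2 : (x + y).coeff a = x.coeff a + y.coeff a := rfl
  rcases eq_or_ne (q a) b with h | h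
  · rw [fcomp_apply_pos q b _ h, h1, fcomp_apply_pos q b _ h, fcomp_apply_pos q b _ h, h2]
  · rw [fcomp_apply_neg q b _ h, h1, fcomp_apply_neg q b _ h, fcomp_apply_neg q b _ h, add_zero]

/-- `fcomp` as an additive monoid hom. -/
noncomputable def fcompHom {β : Type*} (q : G → β) (b : β) :
    MonoidAlgebra k G →+ MonoidAlgebra k G :=
  AddMonoidHom.mk' (fcomp q b) (fcomp_add q b)

theorem fcomp_sub {β : Type*} (q : G → β) (b : β) (x y : MonoidAlgebra k G) :
    fcomp q b (x - y) = fcomp q b x - fcomp q b y :=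
  (fcompHom q b).map_sub x y

theorem fcomp_finset_sum {β : Type*} {ι : Type*} (q : G → β) (b : β) (s : Finset ι)
    (F : ι → MonoidAlgebra k G) :
    fcomp q b (∑ i ∈ s, F i) = ∑ i ∈ s, fcomp q b (F i) :=
  map_sum (fcompHom q b) F s

theorem fcomp_eq_self {β : Type*} (q : G → β) (b : β) {x : MonoidAlgebra k G}
    (h : ∀ a ∈ x.coeff.support, q a = b) : fcomp q b x = x := by
  ext a
  rcases eq_or_ne (x.coeff a) 0 with h0 | h0
  · rcases eq_or_ne (q a) b with h1 | h1
    · rw [fcomp_apply_pos q b x h1, h0]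
    · rw [fcomp_apply_neg q b x h1, h0]
  · exact fcomp_apply_pos q b x (h a (Finsupp.mem_support_iff.mpr h0))

theorem fcomp_eq_zero {β : Type*} (q : G → β) (b : β) {x : MonoidAlgebra k G}
    (h : ∀ a ∈ x.coeff.support, ¬ q a = b) : fcomp q b x = 0 := by
  ext a
  rcases eq_or_ne (x.coeff a) 0 with h0 | h0
  · rcases eq_or_ne (q a) b with h1 | h1
    · rw [fcomp_apply_pos q b x h1, h0]; rfl
    · rw [fcomp_apply_neg q b x h1]; rfl
  · rw [fcomp_apply_neg q b x (h a (Finsupp.mem_support_iff.mpr h0))]; rfl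

theorem fcomp_single_pos {β : Type*} (q : G → β) (b : β) {a : G} (c : k) (h : q a = b) :
    fcomp q b (MonoidAlgebra.single a c) = MonoidAlgebra.single a c :=
  fcomp_eq_self q b fun x hx => by
    rw [MonoidAlgebra.coeff_single, Finsupp.mem_support_iff] at hx
    rcases Finsupp.single_apply_ne_zero.mp hx with ⟨rfl, -⟩
    exact h

theorem fcomp_single_neg {β : Type*} (q : G → β) (b : β) {a : G} (c : k) (h : ¬ q a = b) :
    fcomp q b (MonoidAlgebra.single a c) = 0 :=
  fcomp_eq_zero q b fun x hx => by
    rw [MonoidAlgebra.coeff_single, Finsupp.mem_support_iff] at hx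
    rcases Finsupp.single_apply_ne_zero.mp hx with ⟨rfl, -⟩
    exact h

theorem fcomp_support_subset {β : Type*} (q : G → β) (b : β) (x : MonoidAlgebra k G) :
    (fcomp q b x).coeff.support ⊆ x.coeff.support := by
  intro a ha
  rw [Finsupp.mem_support_iff] at ha ⊢
  intro h0
  rcases eq_or_ne (q a) b with h1 | h1
  · rw [fcomp_apply_pos q b x h1] at ha; exact ha h0
  · rw [fcomp_apply_neg q b x h1] at ha; exact ha rfl

theorem mem_support_fcomp {β : Type*} (q : G → β) (b : β) (x : MonoidAlgebra k G) {a : G}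
    (ha : a ∈ (fcomp q b x).coeff.support) : q a = b := by
  by_contra h
  rw [Finsupp.mem_support_iff, fcomp_apply_neg q b x h] at ha
  exact ha rfl

theorem fcomp_mul_right {β : Type*} (q : G → β) (b : β) (c f : MonoidAlgebra k G)
    (hinv : ∀ (x : G), ∀ a ∈ f.coeff.support, q (x * a) = q x) :
    fcomp q b (c * f) = fcomp q b c * f := by
  classical
  have hsupp : ∀ (y : MonoidAlgebra k G) (s : G), s ∈ (y * f).coeff.support →
      ∃ u ∈ y.coeff.support, ∃ v ∈ f.coeff.support, u * v = s := by
    intro y s hs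
    have := MonoidAlgebra.support_coeff_mul_subset y f hs
    rwa [Finset.mem_mul] at this
  have h1 : fcomp q b (fcomp q b c * f) = fcomp q b c * f := by
    refine fcomp_eq_self q b fun s hs => ?_
    obtain ⟨u, hu, v, hv, rfl⟩ := hsupp _ s hs
    rw [hinv u v hv]
    exact mem_support_fcomp q b c hu
  have h2 : fcomp q b ((c - fcomp q b c) * f) = 0 := by
    refine fcomp_eq_zero q b fun s hs => ?_
    obtain ⟨u, hu, v, hv, rfl⟩ := hsupp _ s hs
    rw [hinv u v hv]
    rw [Finsupp.mem_support_iff] at hu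
    intro hq
    apply hu
    rw [MonoidAlgebra.coeff_sub, Finsupp.sub_apply, fcomp_apply_pos q b c hq, sub_self]
  calc fcomp q b (c * f) = fcomp q b (fcomp q b c * f + (c - fcomp q b c) * f) := by
        rw [← add_mul, add_sub_cancel]
    _ = fcomp q b c * f := by rw [fcomp_add, h1, h2, add_zero]

theorem fcomp_mem_span {β : Type*} (S : Finset (MonoidAlgebra k G)) (q : G → β) (b : β)
    (hinv : ∀ f ∈ S, ∀ (x : G), ∀ a ∈ f.coeff.support, q (x * a) = q x)
    {x : MonoidAlgebra k G} (hx : x ∈ Ideal.span (S : Set (MonoidAlgebra k G))) :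
    fcomp q b x ∈ Ideal.span (S : Set (MonoidAlgebra k G)) := by
  obtain ⟨c, -, hc⟩ := Submodule.mem_span_finset.mp hx
  have : fcomp q b x = ∑ f ∈ S, fcomp q b (c f * f) := by
    rw [← hc]
    exact map_sum (fcompHom (k := k) q b) (fun f => c f • f) S
  rw [this]
  refine Ideal.sum_mem _ fun f hf => ?_
  rw [fcomp_mul_right q b (c f) f (hinv f hf)]
  exact Ideal.mul_mem_left _ _ (Ideal.subset_span hf)

theorem fcomp_sum_image {β : Type*} [DecidableEq β] (q : G → β) (x : MonoidAlgebra k G) :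
    ∑ b ∈ x.coeff.support.image q, fcomp q b x = x := by
  ext a
  rw [MonoidAlgebra.coeff_sum, Finset.sum_apply']
  rcases eq_or_ne (x.coeff a) 0 with h0 | h0
  · rw [h0]
    refine Finset.sum_eq_zero fun b hb => ?_
    rcases eq_or_ne (q a) b with h1 | h1
    · rw [fcomp_apply_pos q b x h1, h0]
    · rw [fcomp_apply_neg q b x h1]
  · have ha : a ∈ x.coeff.support := Finsupp.mem_support_iff.mpr h0
    rw [Finset.sum_eq_single_of_mem (q a) (Finset.mem_image_of_mem q ha)]
    · exact fcomp_apply_pos q (q a) x rfl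
    · intro b _ hb
      exact fcomp_apply_neg q b x (Ne.symm hb)

theorem fcomp_eq_zero_of_not_mem_image {β : Type*} [DecidableEq β] (q : G → β) (b : β)
    (x : MonoidAlgebra k G) (hb : b ∉ x.coeff.support.image q) : fcomp q b x = 0 :=
  fcomp_eq_zero q b fun a ha h => hb (h ▸ Finset.mem_image_of_mem q ha)


theorem quot_inv {G : Type*} [CommGroup G] (H : Subgroup G) {a : G} (haH : a ∈ H) (x : G) :
    (QuotientGroup.mk (x * a) : G ⧸ H) = QuotientGroup.mk x := by
  rw [QuotientGroup.mk_mul, (QuotientGroup.eq_one_iff a).mpr haH, mul_one]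

theorem key5 (P : Ideal (MonoidAlgebra k G)) (hmax : P.IsMaximal)
    (hfaith : ∀ g : G, MonoidAlgebra.of k G g - 1 ∈ P → g = 1)
    (S : Finset (MonoidAlgebra k G)) (hspan : Ideal.span (S : Set (MonoidAlgebra k G)) = P)
    (H : Subgroup G) (hHS : ∀ f ∈ S, ∀ a ∈ f.coeff.support, a ∈ H)
    (p : ℕ) (hp : p.Prime) (g : G) (hg : g ^ p = 1) : g ∈ H := by
  by_contra hgH
  have hg1 : g ≠ 1 := fun h => hgH (h ▸ H.one_mem)
  haveI : Fact p.Prime := ⟨hp⟩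
  have hord : orderOf g = p := orderOf_eq_prime hg hg1
  have hpow : ∀ i : ℕ, 0 < i → i < p → g ^ i ∉ H := by
    intro i hi0 hip hgi
    apply hgH
    have hnd : ¬ p ∣ i := Nat.not_dvd_of_pos_of_lt hi0 hip
    have hzne : (i : ZMod p) ≠ 0 := fun h => hnd ((ZMod.natCast_eq_zero_iff i p).mp h)
    obtain ⟨m, hm⟩ := ZMod.natCast_zmod_surjective (n := p) ((i : ZMod p)⁻¹)
    have hmul : ((i * m : ℕ) : ZMod p) = ((1 : ℕ) : ZMod p) := by
      push_cast
      rw [hm, mul_inv_cancel₀ hzne]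
    have hmod : i * m ≡ 1 [MOD p] := (ZMod.natCast_eq_natCast_iff _ _ _).mp hmul
    have hpoweq : g ^ (i * m) = g ^ 1 := by
      rw [pow_eq_pow_iff_modEq, hord]
      exact hmod
    have : g = (g ^ i) ^ m := by rw [← pow_mul, hpoweq, pow_one]
    rw [this]
    exact pow_mem hgi m
  have hgeom : ((∑ i ∈ Finset.range p, (MonoidAlgebra.of k G g) ^ i) *
      (MonoidAlgebra.of k G g - 1)) = 0 := by
    rw [geom_sum_mul, ← map_pow, hg, map_one, sub_self]
  have hmem : (∑ i ∈ Finset.range p, (MonoidAlgebra.of k G g) ^ i) *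
      (MonoidAlgebra.of k G g - 1) ∈ P := by rw [hgeom]; exact P.zero_mem
  rcases hmax.isPrime.mem_or_mem hmem with h2 | h1
  · -- the geometric sum is in P : filter at the trivial coset
    rw [← hspan] at h2
    have hinvH : ∀ f ∈ S, ∀ (x : G), ∀ a ∈ f.coeff.support,
        (fun a : G => (QuotientGroup.mk a : G ⧸ H)) (x * a)
          = (fun a : G => (QuotientGroup.mk a : G ⧸ H)) x := by
      intro f hf x a ha
      exact quot_inv H (hHS f hf a ha) x
    have h3 := fcomp_mem_span S (fun a : G => (QuotientGroup.mk a : G ⧸ H)) 1 hinvH h2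
    have h4 : fcomp (fun a : G => (QuotientGroup.mk a : G ⧸ H)) 1
        (∑ i ∈ Finset.range p, (MonoidAlgebra.of k G g) ^ i) = 1 := by
      rw [fcomp_finset_sum (fun a : G => (QuotientGroup.mk a : G ⧸ H)) 1 (Finset.range p)
        (fun i => (MonoidAlgebra.of k G g) ^ i)]
      rw [Finset.sum_eq_single_of_mem 0 (Finset.mem_range.mpr hp.pos)]
      · show fcomp _ 1 ((MonoidAlgebra.of k G g) ^ 0) = 1
        rw [pow_zero, MonoidAlgebra.one_def,
          fcomp_single_pos _ _ _ ((QuotientGroup.eq_one_iff (1 : G)).mpr H.one_mem)]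
      · intro i hi hine
        show fcomp _ 1 ((MonoidAlgebra.of k G g) ^ i) = 0
        rw [← map_pow, MonoidAlgebra.of_apply]
        refine fcomp_single_neg _ _ _ ?_
        intro hq
        exact hpow i (Nat.pos_of_ne_zero hine) (Finset.mem_range.mp hi)
          ((QuotientGroup.eq_one_iff _).mp hq)
    rw [h4] at h3
    exact (Ideal.ne_top_iff_one _).mp hmax.ne_top (hspan ▸ h3)
  · exact absurd (hfaith g h1) hg1

theorem exists_degree {G : Type*} [CommGroup G] (L : Subgroup G) (hL : L.FG) (H : Subgroup G)
    (hHL : H ≤ L) {g : G} (hgL : g ∈ L) (hg : ∀ n : ℕ, 0 < n → g ^ n ∉ H) :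
    ∃ lam : G → ℤ, (∀ x y, x ∈ L → y ∈ L → lam (x * y) = lam x + lam y) ∧
      (∀ h ∈ H, lam h = 0) ∧ 0 < lam g := by
  classical
  haveI : Group.FG ↥L := (Group.fg_iff_subgroup_fg L).mpr hL
  set N : Subgroup ↥L := H.subgroupOf L with hN
  haveI : Group.FG (↥L ⧸ N) := Group.fg_of_surjective (QuotientGroup.mk'_surjective N)
  set tQ := CommGroup.torsion (↥L ⧸ N) with htQ
  haveI : Group.FG ((↥L ⧸ N) ⧸ tQ) := Group.fg_of_surjective (QuotientGroup.mk'_surjective tQ)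
  have htfQ : Monoid.IsTorsionFree ((↥L ⧸ N) ⧸ tQ) := Monoid.IsTorsionFree.quotient_torsion _
  set A := Additive ((↥L ⧸ N) ⧸ tQ) with hA
  haveI : AddGroup.FG A := AddGroup.fg_iff_addMonoid_fg.mpr
    (Monoid.fg_iff_add_fg.mp (Group.fg_iff_monoid_fg.mp ‹_›))
  haveI : Module.Finite ℤ A := Module.Finite.iff_addGroup_fg.mpr ‹_›
  haveI : IsAddTorsionFree A := by
    rw [isAddTorsionFree_iff_not_isOfFinAddOrder]
    intro a ha hfin
    exact htfQ a.toMul ha (isOfFinAddOrder_ofMul_iff.mp hfin)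
  haveI : Module.Free ℤ A := Module.free_of_finite_type_torsion_free'
  set bQ := Module.Free.chooseBasis ℤ A with hbQ
  set π : ↥L →* (↥L ⧸ N) ⧸ tQ := (QuotientGroup.mk' tQ).comp (QuotientGroup.mk' N) with hπ
  have hπg : π ⟨g, hgL⟩ ≠ 1 := by
    intro h1
    have h2 : ((QuotientGroup.mk' N) ⟨g, hgL⟩ : ↥L ⧸ N) ∈ tQ := by
      rw [← QuotientGroup.eq_one_iff]
      exact h1
    rw [CommGroup.mem_torsion] at h2
    obtain ⟨n, hn0, hnn⟩ := isOfFinOrder_iff_pow_eq_one.mp h2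
    rw [← map_pow, QuotientGroup.mk'_apply, QuotientGroup.eq_one_iff] at hnn
    rw [hN, Subgroup.mem_subgroupOf] at hnn
    exact hg n hn0 hnn
  have haQ : Additive.ofMul (π ⟨g, hgL⟩) ≠ 0 := fun h => hπg h
  obtain ⟨i, hi⟩ : ∃ i, bQ.repr (Additive.ofMul (π ⟨g, hgL⟩)) i ≠ 0 := by
    by_contra hall
    push_neg at hall
    apply haQ
    rw [← bQ.repr.map_eq_zero_iff]
    exact Finsupp.ext hall
  set lam0 : G → ℤ := fun x =>
    if hx : x ∈ L then bQ.repr (Additive.ofMul (π ⟨x, hx⟩)) i else 0 with hlam0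
  have hlamL : ∀ (x : G) (hx : x ∈ L), lam0 x = bQ.repr (Additive.ofMul (π ⟨x, hx⟩)) i := by
    intro x hx
    simp only [hlam0, dif_pos hx]
  have hhom : ∀ x y, x ∈ L → y ∈ L → lam0 (x * y) = lam0 x + lam0 y := by
    intro x y hx hy
    have hxy : x * y ∈ L := mul_mem hx hy
    rw [hlamL _ hxy, hlamL _ hx, hlamL _ hy]
    have hmul : (⟨x * y, hxy⟩ : ↥L) = ⟨x, hx⟩ * ⟨y, hy⟩ := rfl
    rw [hmul, map_mul]
    have : Additive.ofMul (π ⟨x, hx⟩ * π ⟨y, hy⟩)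
        = Additive.ofMul (π ⟨x, hx⟩) + Additive.ofMul (π ⟨y, hy⟩) := rfl
    rw [this, map_add, Finsupp.add_apply]
  have hH0 : ∀ h ∈ H, lam0 h = 0 := by
    intro h hh
    have hL' : h ∈ L := hHL hh
    have hker : π ⟨h, hL'⟩ = 1 := by
      have h1 : (QuotientGroup.mk' N) ⟨h, hL'⟩ = 1 := by
        rw [QuotientGroup.mk'_apply, QuotientGroup.eq_one_iff, hN, Subgroup.mem_subgroupOf]
        exact hh
      rw [hπ, MonoidHom.comp_apply, h1, map_one]
    rw [hlamL _ hL', hker]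
    have : Additive.ofMul (1 : (↥L ⧸ N) ⧸ tQ) = 0 := rfl
    rw [this, map_zero, Finsupp.zero_apply]
  have hlg : lam0 g = bQ.repr (Additive.ofMul (π ⟨g, hgL⟩)) i := hlamL g hgL
  rcases lt_trichotomy (lam0 g) 0 with hneg | hzero | hpos
  · refine ⟨fun x => - lam0 x, ?_, ?_, ?_⟩
    · intro x y hx hy
      show -lam0 (x * y) = -lam0 x + -lam0 y
      rw [hhom x y hx hy]; ring
    · intro h hh
      show -lam0 h = 0
      rw [hH0 h hh]; ring
    · show 0 < -lam0 g
      omega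
  · rw [hlg] at hzero
    exact absurd hzero hi
  · exact ⟨lam0, hhom, hH0, hpos⟩

theorem key6 (P : Ideal (MonoidAlgebra k G)) (hmax : P.IsMaximal)
    (S : Finset (MonoidAlgebra k G)) (hspan : Ideal.span (S : Set (MonoidAlgebra k G)) = P)
    (T₀ : Finset G) (hHS : ∀ f ∈ S, ∀ a ∈ f.coeff.support, a ∈ Subgroup.closure (T₀ : Set G))
    (g : G) : ∃ n : ℕ, 0 < n ∧ g ^ n ∈ Subgroup.closure (T₀ : Set G) := by
  classical
  set H : Subgroup G := Subgroup.closure (T₀ : Set G) with hHdef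
  by_contra hcon
  push_neg at hcon
  have hgH : g ∉ H := by
    have := hcon 1 one_pos
    rwa [pow_one] at this
  have hinvH : ∀ f ∈ S, ∀ (x : G), ∀ a ∈ f.coeff.support,
      (fun a : G => (QuotientGroup.mk a : G ⧸ H)) (x * a)
        = (fun a : G => (QuotientGroup.mk a : G ⧸ H)) x := by
    intro f hf x a ha
    exact quot_inv H (hHS f hf a ha) x
  set u : MonoidAlgebra k G := 1 + MonoidAlgebra.of k G g with hu
  have huP : u ∉ P := by
    intro huP
    rw [← hspan] at huP
    have h1 := fcomp_mem_span S (fun a : G => (QuotientGroup.mk a : G ⧸ H)) 1 hinvH huP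
    have h2 : fcomp (fun a : G => (QuotientGroup.mk a : G ⧸ H)) 1 u = 1 := by
      rw [hu, fcomp_add, MonoidAlgebra.one_def,
        fcomp_single_pos _ _ _ ((QuotientGroup.eq_one_iff (1 : G)).mpr H.one_mem),
        MonoidAlgebra.of_apply,
        fcomp_single_neg _ _ _ (fun hq => hgH ((QuotientGroup.eq_one_iff g).mp hq)), add_zero]
    rw [h2] at h1
    exact (Ideal.ne_top_iff_one _).mp hmax.ne_top (hspan ▸ h1)
  obtain ⟨v, w, hwP, hvw⟩ := hmax.exists_inv huP
  have hrel : u * v - 1 ∈ P := by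
    have h : u * v - 1 = -w := by rw [← hvw]; ring
    rw [h]
    exact P.neg_mem hwP
  set L : Subgroup G := Subgroup.closure ((T₀ ∪ v.coeff.support ∪ {g} : Finset G) : Set G) with hLdef
  have hsub : (T₀ : Set G) ∪ (v.coeff.support : Set G) ∪ {g}
      = ((T₀ ∪ v.coeff.support ∪ {g} : Finset G) : Set G) := by
    simp [Finset.coe_union]
  have hHL : H ≤ L := by
    rw [hHdef, hLdef]
    refine Subgroup.closure_mono ?_
    rw [← hsub]
    intro x hx
    exact Or.inl (Or.inl hx)
  have hgL : g ∈ L := by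
    apply Subgroup.subset_closure
    rw [← hsub]
    exact Or.inr rfl
  have hvL : ∀ a ∈ v.coeff.support, a ∈ L := by
    intro a ha
    apply Subgroup.subset_closure
    rw [← hsub]
    exact Or.inl (Or.inr ha)
  have hLfg : L.FG := ⟨T₀ ∪ v.coeff.support ∪ {g}, rfl⟩
  obtain ⟨lam, hlmul, hlH, hlg⟩ := exists_degree L hLfg H hHL hgL hcon
  set d : ℤ := lam g with hd
  have hlam1 : lam 1 = 0 := hlH 1 H.one_mem
  set qq : G → Option ℤ := fun a => if a ∈ L then some (lam a) else none with hqq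
  have hinvq : ∀ f ∈ S, ∀ (x : G), ∀ a ∈ f.coeff.support, qq (x * a) = qq x := by
    intro f hf x a ha
    have haH : a ∈ H := hHS f hf a ha
    have haL : a ∈ L := hHL haH
    by_cases hx : x ∈ L
    · have hxa : x * a ∈ L := mul_mem hx haL
      rw [hqq]
      simp only [if_pos hx, if_pos hxa]
      rw [hlmul x a hx haL, hlH a haH, add_zero]
    · have hxa : x * a ∉ L := by
        intro hmem
        apply hx
        have := mul_mem hmem (inv_mem haL)
        rwa [mul_inv_cancel_right] at this
      rw [hqq]
      simp only [if_neg hx, if_neg hxa]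
  have hqqL : ∀ a : G, a ∈ L → qq a = some (lam a) := fun a ha => if_pos ha
  -- the shift identity
  have hshift : ∀ (n : ℤ) (x : MonoidAlgebra k G), (∀ a ∈ x.coeff.support, a ∈ L) →
      fcomp qq (some n) (MonoidAlgebra.of k G g * x)
        = MonoidAlgebra.of k G g * fcomp qq (some (n - d)) x := by
    intro n x hx
    ext a
    have happ : ∀ y : MonoidAlgebra k G, (MonoidAlgebra.of k G g * y).coeff a = y.coeff (g⁻¹ * a) := by
      intro y
      rw [MonoidAlgebra.of_apply, MonoidAlgebra.coeff_single_mul_apply, one_mul]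
    rcases eq_or_ne (x.coeff (g⁻¹ * a)) 0 with h0 | h0
    · have hR : (fcomp qq (some (n - d)) x).coeff (g⁻¹ * a) = 0 := by
        rcases eq_or_ne (qq (g⁻¹ * a)) (some (n - d)) with hq | hq
        · rw [fcomp_apply_pos _ _ _ hq, h0]
        · rw [fcomp_apply_neg _ _ _ hq]
      rw [happ, hR]
      rcases eq_or_ne (qq a) (some n) with hq | hq
      · rw [fcomp_apply_pos _ _ _ hq, happ, h0]
      · rw [fcomp_apply_neg _ _ _ hq]
    · have ha' : g⁻¹ * a ∈ x.coeff.support := Finsupp.mem_support_iff.mpr h0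
      have haL' : g⁻¹ * a ∈ L := hx _ ha'
      have haL : a ∈ L := by
        have := mul_mem hgL haL'
        rwa [mul_inv_cancel_left] at this
      have hadd : lam a = d + lam (g⁻¹ * a) := by
        have := hlmul g (g⁻¹ * a) hgL haL'
        rwa [mul_inv_cancel_left] at this
      rcases eq_or_ne (lam a) n with he | he
      · rw [fcomp_apply_pos _ _ _ (by rw [hqqL a haL, he]), happ, happ,
          fcomp_apply_pos _ _ _ (by rw [hqqL _ haL']; congr 1; omega)]
      · rw [fcomp_apply_neg _ _ _
            (by rw [hqqL a haL]; exact fun hc => he (Option.some.inj hc)), happ,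
          fcomp_apply_neg _ _ _ (by
            rw [hqqL _ haL']
            intro hc
            have := Option.some.inj hc
            apply he
            omega)]
  have hone : ∀ n : ℤ, fcomp qq (some n) (1 : MonoidAlgebra k G)
      = if n = 0 then (1 : MonoidAlgebra k G) else 0 := by
    intro n
    have hq1 : qq (1 : G) = some 0 := by rw [hqqL 1 (one_mem L), hlam1]
    rcases eq_or_ne n 0 with rfl | hne
    · rw [if_pos rfl, MonoidAlgebra.one_def, fcomp_single_pos _ _ _ hq1]
    · rw [if_neg hne, MonoidAlgebra.one_def]
      refine fcomp_single_neg _ _ _ ?_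
      rw [hq1]
      exact fun hc => hne (Option.some.inj hc).symm
  have hcompP : ∀ (n : ℤ) (x : MonoidAlgebra k G), x ∈ P → fcomp qq (some n) x ∈ P := by
    intro n x hx
    rw [← hspan] at hx ⊢
    exact fcomp_mem_span S qq (some n) hinvq hx
  have hrel2 : ∀ n : ℤ, fcomp qq (some n) v + MonoidAlgebra.of k G g * fcomp qq (some (n - d)) v
      - (if n = 0 then (1 : MonoidAlgebra k G) else 0) ∈ P := by
    intro n
    have h1 : fcomp qq (some n) (u * v - 1) ∈ P := hcompP n _ hrel
    have hexp : fcomp qq (some n) (u * v - 1)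
        = fcomp qq (some n) v + MonoidAlgebra.of k G g * fcomp qq (some (n - d)) v
          - (if n = 0 then (1 : MonoidAlgebra k G) else 0) := by
      have huv : u * v - 1 = (v + MonoidAlgebra.of k G g * v) - 1 := by rw [hu]; ring
      rw [huv, fcomp_sub, fcomp_add, hshift n v hvL, hone n]
    rwa [hexp] at h1
  have hvP : v ∉ P := by
    intro hv
    refine (Ideal.ne_top_iff_one _).mp hmax.ne_top ?_
    have h : (1 : MonoidAlgebra k G) = u * v - (u * v - 1) := by ring
    rw [h]
    exact P.sub_mem (Ideal.mul_mem_left _ _ hv) hrel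
  set I : Finset ℤ := v.coeff.support.image lam with hI
  have hvcomp_notmem : ∀ n : ℤ, n ∉ I → fcomp qq (some n) v = 0 := by
    intro n hn
    refine fcomp_eq_zero _ _ fun a ha hqa => hn ?_
    rw [hqqL a (hvL a ha)] at hqa
    rw [hI, ← Option.some.inj hqa]
    exact Finset.mem_image_of_mem lam ha
  set Sbad : Finset ℤ := I.filter (fun n => fcomp qq (some n) v ∉ P) with hSbad
  have hnotmemP : ∀ n : ℤ, n ∉ Sbad → fcomp qq (some n) v ∈ P := by
    intro n hn
    by_cases hIn : n ∈ I
    · by_contra hP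
      exact hn (Finset.mem_filter.mpr ⟨hIn, hP⟩)
    · rw [hvcomp_notmem n hIn]
      exact P.zero_mem
  have hSne : Sbad.Nonempty := by
    rw [Finset.nonempty_iff_ne_empty]
    intro hSe
    apply hvP
    have hdecomp : v = ∑ b ∈ v.coeff.support.image qq, fcomp qq b v := (fcomp_sum_image qq v).symm
    rw [hdecomp]
    refine Ideal.sum_mem _ fun b hb => ?_
    obtain ⟨a, ha, rfl⟩ := Finset.mem_image.mp hb
    rw [hqqL a (hvL a ha)]
    refine hnotmemP (lam a) ?_
    rw [hSe]
    exact Finset.notMem_empty _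
  set nmin := Sbad.min' hSne with hnmin
  have hminP : fcomp qq (some nmin) v ∉ P := (Finset.mem_filter.mp (Sbad.min'_mem hSne)).2
  have hmin0 : nmin = 0 := by
    have h1 := hrel2 nmin
    have h2 : fcomp qq (some (nmin - d)) v ∈ P := by
      refine hnotmemP _ fun hmem => ?_
      have := Sbad.min'_le _ hmem
      omega
    by_contra hne
    rw [if_neg hne, sub_zero] at h1
    apply hminP
    have h3 := P.sub_mem h1 (Ideal.mul_mem_left _ (MonoidAlgebra.of k G g) h2)
    rwa [add_sub_cancel_right] at h3
  set nmax := Sbad.max' hSne with hnmax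
  have hmaxP : fcomp qq (some nmax) v ∉ P := (Finset.mem_filter.mp (Sbad.max'_mem hSne)).2
  have hge : (0 : ℤ) ≤ nmax := hmin0 ▸ Sbad.min'_le _ (Sbad.max'_mem hSne)
  have h1 := hrel2 (nmax + d)
  have hne0 : nmax + d ≠ 0 := by omega
  rw [if_neg hne0, sub_zero] at h1
  have h2 : fcomp qq (some (nmax + d)) v ∈ P := by
    refine hnotmemP _ fun hmem => ?_
    have := Finset.le_max' _ _ hmem
    omega
  have h3 : MonoidAlgebra.of k G g * fcomp qq (some (nmax + d - d)) v ∈ P := by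
    have := P.sub_mem h1 h2
    rwa [add_sub_cancel_left] at this
  apply hmaxP
  have h5 : MonoidAlgebra.of k G g⁻¹ * (MonoidAlgebra.of k G g * fcomp qq (some nmax) v) ∈ P := by
    refine Ideal.mul_mem_left _ _ ?_
    rwa [add_sub_cancel_right] at h3
  rwa [← mul_assoc, ← map_mul, inv_mul_cancel, map_one, one_mul] at h5

theorem subgroup_gen_bound {Γ : Type*} [CommGroup Γ] (B : Subgroup Γ) (hB : B.FG)
    (htf : Monoid.IsTorsionFree ↥B) (V : Subgroup Γ) (hVB : V ≤ B) :
    ∃ u : Finset Γ, ↑u ⊆ (V : Set Γ) ∧ u.card ≤ Module.finrank ℤ (Additive ↥B) ∧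
      Subgroup.closure (u : Set Γ) = V := by
  classical
  haveI : Group.FG ↥B := (Group.fg_iff_subgroup_fg B).mpr hB
  haveI : AddGroup.FG (Additive ↥B) := AddGroup.fg_iff_addMonoid_fg.mpr
    (Monoid.fg_iff_add_fg.mp (Group.fg_iff_monoid_fg.mp ‹_›))
  haveI : Module.Finite ℤ (Additive ↥B) := Module.Finite.iff_addGroup_fg.mpr ‹_›
  haveI : IsAddTorsionFree (Additive ↥B) := by
    rw [isAddTorsionFree_iff_not_isOfFinAddOrder]
    intro a ha hfin
    exact htf a.toMul ha (isOfFinAddOrder_ofMul_iff.mp hfin)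
  haveI : Module.Free ℤ (Additive ↥B) := Module.free_of_finite_type_torsion_free'
  set V' : Submodule ℤ (Additive ↥B) :=
    AddSubgroup.toIntSubmodule (Subgroup.toAddSubgroup (V.subgroupOf B)) with hV'
  have hmemV' : ∀ x : Additive ↥B, x ∈ V' ↔ ((x.toMul : ↥B) : Γ) ∈ V := fun x => Iff.rfl
  haveI : Module.Finite ℤ ↥V' := Module.Finite.iff_fg.mpr (IsNoetherian.noetherian V')
  haveI : Module.IsTorsionFree ℤ ↥V' := inferInstance
  haveI : Module.Free ℤ ↥V' := Module.free_of_finite_type_torsion_free'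
  set bV : Module.Basis (Module.Free.ChooseBasisIndex ℤ ↥V') ℤ ↥V' :=
    Module.Free.chooseBasis ℤ ↥V' with hbV
  set e : Module.Free.ChooseBasisIndex ℤ ↥V' → Γ :=
    fun i => (((bV i : Additive ↥B).toMul : ↥B) : Γ) with he
  have heV : ∀ i, e i ∈ V := fun i => (hmemV' _).mp (bV i).2
  set u : Finset Γ := Finset.image e Finset.univ with hu
  have husub : (u : Set Γ) ⊆ (V : Set Γ) := by
    intro x hx
    obtain ⟨i, _, rfl⟩ := Finset.mem_image.mp hx
    exact heV i
  refine ⟨u, husub, ?_, ?_⟩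
  · calc u.card ≤ Finset.univ.card := Finset.card_image_le
      _ = Fintype.card (Module.Free.ChooseBasisIndex ℤ ↥V') := rfl
      _ = Module.finrank ℤ ↥V' := (Module.finrank_eq_card_chooseBasisIndex ℤ ↥V').symm
      _ ≤ Module.finrank ℤ (Additive ↥B) := Submodule.finrank_le V'
  · apply le_antisymm
    · exact (Subgroup.closure_le V).mpr husub
    · intro x hx
      have hxB : x ∈ B := hVB hx
      set x' : Additive ↥B := Additive.ofMul (⟨x, hxB⟩ : ↥B) with hx'
      have hx'V : x' ∈ V' := (hmemV' x').mpr hx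
      set c : Module.Free.ChooseBasisIndex ℤ ↥V' → ℤ :=
        fun i => bV.repr ⟨x', hx'V⟩ i with hc
      have hrepr : ∑ i, c i • bV i = (⟨x', hx'V⟩ : ↥V') := bV.sum_repr ⟨x', hx'V⟩
      have hcoe : ∑ i, c i • ((bV i : Additive ↥B)) = x' := by
        have h1 := congrArg (V'.subtype) hrepr
        rw [map_sum] at h1
        simp only [map_smul] at h1
        exact h1
      have h2 := congrArg Additive.toMul hcoe
      rw [toMul_sum] at h2
      simp only [toMul_zsmul] at h2
      have h3 := congrArg (B.subtype) h2
      rw [map_prod] at h3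
      simp only [map_zpow] at h3
      have h4 : x = ∏ i, (e i) ^ (c i) := h3.symm
      rw [h4]
      exact Subgroup.prod_mem _ fun i _ =>
        Subgroup.zpow_mem _ (Subgroup.subset_closure
          (Finset.mem_image_of_mem e (Finset.mem_univ i))) _

theorem prufer_of_torsion_over {Γ : Type*} [CommGroup Γ] (htf : Monoid.IsTorsionFree Γ)
    (B : Subgroup Γ) (hB : B.FG) (htor : ∀ x : Γ, ∃ n : ℕ, 0 < n ∧ x ^ n ∈ B) :
    ∃ m : ℕ, ∀ W : Subgroup Γ, W.FG →
      ∃ s : Finset Γ, ↑s ⊆ (W : Set Γ) ∧ s.card ≤ m ∧ Subgroup.closure (s : Set Γ) = W := by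
  classical
  refine ⟨Module.finrank ℤ (Additive ↥B), fun W hW => ?_⟩
  obtain ⟨t, ht⟩ := hW
  choose nn hnn0 hnnB using htor
  set ee : ℕ := ∏ x ∈ t, nn x with hee
  have he0 : 0 < ee := Finset.prod_pos fun x _ => hnn0 x
  set D : Subgroup Γ :=
    { carrier := {x | x ^ ee ∈ B}
      one_mem' := by simp [B.one_mem]
      mul_mem' := by
        intro a b ha hb
        show (a * b) ^ ee ∈ B
        rw [mul_pow]
        exact mul_mem ha hb
      inv_mem' := by
        intro a ha
        show (a⁻¹) ^ ee ∈ B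
        rw [inv_pow]
        exact inv_mem ha } with hD
  have htD : W ≤ D := by
    rw [← ht]
    refine (Subgroup.closure_le D).mpr ?_
    intro x hx
    show x ^ ee ∈ B
    obtain ⟨cst, hcst⟩ := Finset.dvd_prod_of_mem nn hx
    rw [hee, hcst, pow_mul]
    exact pow_mem (hnnB x) cst
  have hpow : ∀ x ∈ W, x ^ ee ∈ B := fun x hx => htD hx
  set pe : Γ →* Γ := powMonoidHom ee with hpe
  have hinj : Function.Injective pe := by
    intro x y hxy
    have h1 : (x * y⁻¹) ^ ee = 1 := by
      rw [mul_pow, inv_pow]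
      show x ^ ee * (y ^ ee)⁻¹ = 1
      rw [show x ^ ee = y ^ ee from hxy, mul_inv_cancel]
    have h2 : x * y⁻¹ = 1 := by
      by_contra hne
      exact htf (x * y⁻¹) hne (isOfFinOrder_iff_pow_eq_one.mpr ⟨ee, he0, h1⟩)
    rwa [mul_inv_eq_one] at h2
  set U : Subgroup Γ := W.map pe with hU
  have hUB : U ≤ B := by
    rintro y hy
    obtain ⟨x, hxW, rfl⟩ := Subgroup.mem_map.mp hy
    exact hpow x hxW
  have htfB : Monoid.IsTorsionFree ↥B := Monoid.IsTorsionFree.subgroup htf B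
  obtain ⟨u, huV, hucard, huclos⟩ := subgroup_gen_bound B hB htfB U hUB
  have hpull : ∀ y ∈ u, ∃ x, x ∈ W ∧ pe x = y := by
    intro y hy
    exact Subgroup.mem_map.mp (huV hy)
  choose xf hxfW hxfe using hpull
  set s : Finset Γ := u.attach.image (fun y => xf y.1 y.2) with hs
  have hssub : (s : Set Γ) ⊆ (W : Set Γ) := by
    intro x hx
    obtain ⟨y, _, rfl⟩ := Finset.mem_image.mp hx
    exact hxfW _ _
  refine ⟨s, hssub, ?_, ?_⟩
  · calc s.card ≤ u.attach.card := Finset.card_image_le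
      _ = u.card := Finset.card_attach
      _ ≤ _ := hucard
  · apply le_antisymm
    · exact (Subgroup.closure_le W).mpr hssub
    · intro x hxW
      have h2 : (u : Set Γ) ⊆ ((Subgroup.map pe (Subgroup.closure (s : Set Γ))) : Set Γ) := by
        intro y hy
        have hmem : xf y hy ∈ Subgroup.closure (s : Set Γ) :=
          Subgroup.subset_closure
            (Finset.mem_image.mpr ⟨⟨y, hy⟩, Finset.mem_attach u _, rfl⟩)
        exact Subgroup.mem_map.mpr ⟨xf y hy, hmem, hxfe y hy⟩
      have h3 : U ≤ Subgroup.map pe (Subgroup.closure (s : Set Γ)) := by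
        rw [← huclos]
        exact (Subgroup.closure_le _).mpr h2
      have h1 : pe x ∈ Subgroup.map pe (Subgroup.closure (s : Set Γ)) :=
        h3 (Subgroup.mem_map.mpr ⟨x, hxW, rfl⟩)
      obtain ⟨x0, hx0, hx0e⟩ := Subgroup.mem_map.mp h1
      rwa [← hinj hx0e]

theorem torsion_finite_of_fg {Γ : Type*} [CommGroup Γ] [Group.FG Γ] :
    Finite ↥(CommGroup.torsion Γ) := by
  haveI : AddGroup.FG (Additive Γ) := AddGroup.fg_iff_addMonoid_fg.mpr
    (Monoid.fg_iff_add_fg.mp (Group.fg_iff_monoid_fg.mp ‹_›))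
  haveI : Module.Finite ℤ (Additive Γ) := Module.Finite.iff_addGroup_fg.mpr ‹_›
  have hfg : (AddSubgroup.toIntSubmodule (Subgroup.toAddSubgroup (CommGroup.torsion Γ))).FG :=
    IsNoetherian.noetherian _
  have h2 : (Subgroup.toAddSubgroup (CommGroup.torsion Γ)).FG := by
    obtain ⟨u, hu⟩ := hfg
    refine ⟨u, ?_⟩
    rw [← Submodule.span_int_eq_addSubgroupClosure, hu]
    rfl
  have h3 : (CommGroup.torsion Γ).FG := (Subgroup.fg_iff_add_fg _).mpr h2
  haveI : Group.FG ↥(CommGroup.torsion Γ) := (Group.fg_iff_subgroup_fg _).mpr h3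
  refine CommGroup.finite_of_fg_torsion _ ?_
  intro x
  have hx := x.2
  rw [CommGroup.mem_torsion] at hx
  obtain ⟨n, hn0, hn⟩ := isOfFinOrder_iff_pow_eq_one.mp hx
  exact isOfFinOrder_iff_pow_eq_one.mpr ⟨n, hn0, Subtype.ext (by
    rw [show ((x ^ n : ↥(CommGroup.torsion Γ)) : Γ) = (x : Γ) ^ n from rfl, hn]; rfl)⟩

end Stmt7Aux

theorem stmt_7 (k : Type*) [Field k] (hk : IsFGField k)
    (G : Type*) [CommGroup G] [Countable G] (hchar : CharNotInSp k G)
    (hex : ∃ P : Ideal (MonoidAlgebra k G), P.IsMaximal ∧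
      (∀ g : G, MonoidAlgebra.of k G g - 1 ∈ P → g = 1) ∧ P.FG) :
    FiniteTotalRank G := by
  classical
  obtain ⟨P, hmax, hfaith, hFG⟩ := hex
  obtain ⟨S, hspan⟩ := hFG
  set T₀ : Finset G := S.biUnion (fun f => f.coeff.support) with hT₀
  set H : Subgroup G := Subgroup.closure (T₀ : Set G) with hH
  have hHS : ∀ f ∈ S, ∀ a ∈ f.coeff.support, a ∈ H := by
    intro f hf a ha
    exact Subgroup.subset_closure (Finset.mem_coe.mpr (Finset.mem_biUnion.mpr ⟨f, hf, ha⟩))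
  have hkey5 : ∀ p : ℕ, p.Prime → ∀ g : G, g ^ p = 1 → g ∈ H :=
    fun p hp g hg => key5 P hmax hfaith S hspan H hHS p hp g hg
  have hkey6 : ∀ g : G, ∃ n : ℕ, 0 < n ∧ g ^ n ∈ H :=
    fun g => key6 P hmax S hspan T₀ hHS g
  have hHfg : H.FG := ⟨T₀, rfl⟩
  haveI : Group.FG ↥H := (Group.fg_iff_subgroup_fg H).mpr hHfg
  refine ⟨?_, ?_, ?_⟩
  · -- Prüfer rank of the torsion-free quotient
    have htfbar : Monoid.IsTorsionFree (G ⧸ CommGroup.torsion G) :=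
      Monoid.IsTorsionFree.quotient_torsion G
    set Hbar : Subgroup (G ⧸ CommGroup.torsion G) :=
      H.map (QuotientGroup.mk' (CommGroup.torsion G)) with hHbar
    have hHbarfg : Hbar.FG := by
      refine ⟨T₀.image (QuotientGroup.mk' (CommGroup.torsion G)), ?_⟩
      rw [Finset.coe_image, ← MonoidHom.map_closure]
    have htor : ∀ x : G ⧸ CommGroup.torsion G, ∃ n : ℕ, 0 < n ∧ x ^ n ∈ Hbar := by
      intro x
      obtain ⟨g, rfl⟩ := QuotientGroup.mk'_surjective (CommGroup.torsion G) x
      obtain ⟨n, hn0, hnH⟩ := hkey6 g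
      refine ⟨n, hn0, ?_⟩
      rw [← map_pow]
      exact Subgroup.mem_map_of_mem _ hnH
    exact prufer_of_torsion_over htfbar Hbar hHbarfg htor
  · -- finitely many relevant primes
    haveI hTfin : Finite ↥(CommGroup.torsion ↥H) := torsion_finite_of_fg
    have hmap : ∀ p ∈ {p : ℕ | p.Prime ∧ primaryPart G p ≠ ⊥},
        ∃ y : ↥(CommGroup.torsion ↥H), orderOf (((y : ↥H) : G)) = p := by
      intro p hp
      obtain ⟨hprime, hbot⟩ := hp
      haveI : Fact p.Prime := ⟨hprime⟩
      obtain ⟨x, hxmem, hx1⟩ : ∃ x : G, x ∈ primaryPart G p ∧ x ≠ 1 := by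
        by_contra hno
        push_neg at hno
        exact hbot ((Subgroup.eq_bot_iff_forall _).mpr hno)
      obtain ⟨n, hn⟩ := hxmem
      have hex2 : ∃ m : ℕ, x ^ p ^ m = 1 := ⟨n, hn⟩
      set n₀ := Nat.find hex2 with hn₀
      have hn₀spec : x ^ p ^ n₀ = 1 := Nat.find_spec hex2
      have hn₀pos : 0 < n₀ := by
        rcases Nat.eq_zero_or_pos n₀ with h0 | h0
        · exfalso
          apply hx1
          have := hn₀spec
          rwa [h0, pow_zero, pow_one] at this
        · exact h0
      set y : G := x ^ p ^ (n₀ - 1) with hy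
      have hy1 : y ≠ 1 := Nat.find_min hex2 (by omega)
      have hyp : y ^ p = 1 := by
        rw [hy, ← pow_mul, ← pow_succ]
        have : n₀ - 1 + 1 = n₀ := by omega
        rw [this]
        exact hn₀spec
      have hyH : y ∈ H := hkey5 p hprime y hyp
      have hord : orderOf y = p := orderOf_eq_prime hyp hy1
      refine ⟨⟨⟨y, hyH⟩, ?_⟩, hord⟩
      rw [CommGroup.mem_torsion]
      refine isOfFinOrder_iff_pow_eq_one.mpr ⟨p, hprime.pos, Subtype.ext ?_⟩
      rw [show (((⟨y, hyH⟩ : ↥H) ^ p : ↥H) : G) = y ^ p from rfl, hyp]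
      rfl
    choose yf hyf using hmap
    have : Finite ↥{p : ℕ | p.Prime ∧ primaryPart G p ≠ ⊥} := by
      refine Finite.of_injective (fun p => yf p.1 p.2) ?_
      intro p q hpq
      have hpq' : yf p.1 p.2 = yf q.1 q.2 := hpq
      apply Subtype.ext
      rw [← hyf p.1 p.2, ← hyf q.1 q.2, hpq']
    exact Set.toFinite _
  · -- primary components have rank ≤ 1
    intro p hp
    haveI : Fact p.Prime := ⟨hp⟩
    haveI := hmax
    letI F := MonoidAlgebra k G ⧸ P
    letI : Field F := Ideal.Quotient.field P
    refine ⟨1, fun W hW => ?_⟩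
    haveI : Group.FG ↥W := (Group.fg_iff_subgroup_fg W).mpr hW
    have htorW : Monoid.IsTorsion ↥W := by
      intro x
      obtain ⟨n, hn⟩ := (x : ↥(primaryPart G p)).2
      refine isOfFinOrder_iff_pow_eq_one.mpr ⟨p ^ n, pow_pos hp.pos n, ?_⟩
      apply Subtype.ext
      apply Subtype.ext
      have h1 : (((x ^ p ^ n : ↥W) : ↥(primaryPart G p)) : G)
          = (((x : ↥(primaryPart G p)) : G)) ^ p ^ n := rfl
      rw [h1, hn]
      rfl
    haveI : Finite ↥W := CommGroup.finite_of_fg_torsion _ htorW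
    set φ : G →* Fˣ :=
      { toFun := fun x =>
          { val := Ideal.Quotient.mk P (MonoidAlgebra.of k G x)
            inv := Ideal.Quotient.mk P (MonoidAlgebra.of k G x⁻¹)
            val_inv := by
              rw [← map_mul, ← map_mul, mul_inv_cancel, map_one, map_one]
            inv_val := by
              rw [← map_mul, ← map_mul, inv_mul_cancel, map_one, map_one] }
        map_one' := Units.ext (by
          show Ideal.Quotient.mk P (MonoidAlgebra.of k G 1) = 1
          rw [map_one, map_one])
        map_mul' := fun a b => Units.ext (by
          show Ideal.Quotient.mk P (MonoidAlgebra.of k G (a * b)) = _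
          rw [map_mul, map_mul]
          rfl) } with hφ
    have hφinj : Function.Injective φ := by
      intro a b hab
      have h1 : Ideal.Quotient.mk P (MonoidAlgebra.of k G a)
          = Ideal.Quotient.mk P (MonoidAlgebra.of k G b) := congrArg Units.val hab
      have h2 : MonoidAlgebra.of k G a - MonoidAlgebra.of k G b ∈ P :=
        (Ideal.Quotient.mk_eq_mk_iff_sub_mem _ _).mp h1
      have h3 : (MonoidAlgebra.of k G a - MonoidAlgebra.of k G b)
          * MonoidAlgebra.of k G b⁻¹ ∈ P := Ideal.mul_mem_right _ _ h2
      have h4 : MonoidAlgebra.of k G (a * b⁻¹) - 1 ∈ P := by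
        have heq : (MonoidAlgebra.of k G a - MonoidAlgebra.of k G b)
            * MonoidAlgebra.of k G b⁻¹ = MonoidAlgebra.of k G (a * b⁻¹) - 1 := by
          rw [sub_mul, ← map_mul, ← map_mul, mul_inv_cancel, map_one]
        rwa [heq] at h3
      have h5 := hfaith _ h4
      rwa [mul_inv_eq_one] at h5
    set θ : ↥W →* Fˣ := φ.comp ((primaryPart G p).subtype.comp W.subtype) with hθ
    have hθinj : Function.Injective θ :=
      hφinj.comp ((Subgroup.subtype_injective _).comp (Subgroup.subtype_injective _))
    haveI : Finite ↥θ.range := Finite.of_surjective θ.rangeRestrict θ.rangeRestrict_surjective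
    haveI : IsCyclic ↥θ.range := subgroup_units_cyclic θ.range
    haveI : IsCyclic ↥W :=
      isCyclic_of_surjective (MonoidHom.ofInjective hθinj).symm
        (MonoidHom.ofInjective hθinj).symm.surjective
    obtain ⟨gen, hgen⟩ := IsCyclic.exists_generator (α := ↥W)
    refine ⟨{(gen : ↥(primaryPart G p))}, ?_, ?_, ?_⟩
    · intro z hz
      rw [Finset.coe_singleton, Set.mem_singleton_iff] at hz
      rw [hz]
      exact gen.2
    · simp
    · apply le_antisymm
      · rw [Subgroup.closure_le]
        intro z hz
        rw [Finset.coe_singleton, Set.mem_singleton_iff] at hz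
        rw [hz]
        exact gen.2
      · intro x hx
        obtain ⟨m, hm⟩ := Subgroup.mem_zpowers_iff.mp (hgen ⟨x, hx⟩)
        have hc : ((gen : ↥(primaryPart G p))) ^ m = x := congrArg Subtype.val hm
        rw [← hc]
        exact Subgroup.zpow_mem _ (Subgroup.subset_closure (by simp)) m
end

section
/- Let G be a nilpotent group of nilpotency class at most 2 such that the torsion subgroup of G is contained in the centre of G, and let G₁ be a subgroup of finite index in G. Let k be a field and let M be a faithful kG-module such that M = M₁·kG (the kG-submodule generated by M₁ is all of M) for some kG₁-submodule M₁ of M. Then M₁ is a faithful kG₁-module, i.e. the only element of G₁ acting as the identity on M₁ is the identity. -/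
universe u v w

theorem stmt_13 (k : Type*) [Field k] (G : Type*) [Group G]
    (hnil : commutator G ≤ Subgroup.center G)
    (htor : ∀ g : G, IsOfFinOrder g → g ∈ Subgroup.center G)
    (G₁ : Subgroup G) (hfi : G₁.index ≠ 0)
    (M : Type*) [AddCommGroup M] [Module (MonoidAlgebra k G) M]
    [Module k M] [IsScalarTower k (MonoidAlgebra k G) M]
    (hfaith : ∀ g : G, (∀ m : M, MonoidAlgebra.of k G g • m = m) → g = 1)
    (M₁ : Submodule k M)
    (hsub : ∀ h ∈ G₁, ∀ m ∈ M₁, MonoidAlgebra.of k G h • m ∈ M₁)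
    (hgen : Submodule.span (MonoidAlgebra k G) (M₁ : Set M) = ⊤) :
    ∀ g ∈ G₁, (∀ m ∈ M₁, MonoidAlgebra.of k G g • m = m) → g = 1 := by
  intro g hg hgtriv
  -- central elements of G commute with everything in the group algebra
  have hcomm : ∀ z : G, z ∈ Subgroup.center G → ∀ r : MonoidAlgebra k G,
      MonoidAlgebra.of k G z * r = r * MonoidAlgebra.of k G z := by
    intro z hz r
    induction r using MonoidAlgebra.induction_on with
    | of x =>
      rw [← map_mul, ← map_mul, (Subgroup.mem_center_iff.mp hz x)]
    | add f₁ f₂ h1 h2 => rw [mul_add, add_mul, h1, h2]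
    | smul r f ih => rw [mul_smul_comm, smul_mul_assoc, ih]
  -- Lemma A: a central element acting trivially on M₁ is 1
  have lemA : ∀ z : G, z ∈ Subgroup.center G →
      (∀ m ∈ M₁, MonoidAlgebra.of k G z • m = m) → z = 1 := by
    intro z hz htriv
    refine hfaith z ?_
    let S : Submodule (MonoidAlgebra k G) M :=
      { carrier := {m | MonoidAlgebra.of k G z • m = m}
        add_mem' := fun {a b} ha hb => by
          show MonoidAlgebra.of k G z • (a + b) = a + b
          rw [smul_add, ha, hb]
        zero_mem' := smul_zero _
        smul_mem' := fun r m hm => by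
          show MonoidAlgebra.of k G z • (r • m) = r • m
          rw [smul_smul, hcomm z hz r, ← smul_smul, hm] }
    have hle : (⊤ : Submodule (MonoidAlgebra k G) M) ≤ S := by
      rw [← hgen]
      exact Submodule.span_le.mpr (fun m hm => htriv m hm)
    intro m
    exact hle (Submodule.mem_top (x := m))
  have hinvfix : ∀ (x : G) (m : M), MonoidAlgebra.of k G x • m = m →
      MonoidAlgebra.of k G x⁻¹ • m = m := by
    intro x m h
    conv_lhs => rw [← h]
    rw [smul_smul, ← map_mul, inv_mul_cancel, map_one, one_smul]
  set c : G → G := fun x => g⁻¹ * x⁻¹ * g * x with hc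
  have hccen : ∀ x, c x ∈ Subgroup.center G := by
    intro x
    apply hnil
    rw [commutator_def]
    have he : c x = (open scoped commutatorElement in ⁅g⁻¹, x⁻¹⁆) := by
      simp only [hc, commutatorElement_def, inv_inv]
    rw [he]
    exact Subgroup.commutator_mem_commutator (Subgroup.mem_top _) (Subgroup.mem_top _)
  have hconj : ∀ x : G, x⁻¹ * g * x = g * c x := by
    intro x; simp only [hc]; group
  have hcmul : ∀ x y : G, c (x * y) = c x * c y := by
    intro x y
    have h1 : c (x * y) = g⁻¹ * y⁻¹ * g * (c x * y) := by
      simp only [hc]; group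
    have h2 : c x * y = y * c x := (Subgroup.mem_center_iff.mp (hccen x) y).symm
    have h3 : g⁻¹ * y⁻¹ * g * (y * c x) = c y * c x := by
      simp only [hc]; group
    rw [h1, h2, h3, Subgroup.mem_center_iff.mp (hccen x) (c y)]
  let φ : G →* Subgroup.center G :=
    MonoidHom.mk' (fun x => ⟨c x, hccen x⟩) (fun x y => Subtype.ext (hcmul x y))
  -- G₁ is in the kernel of φ
  have hker : G₁ ≤ φ.ker := by
    intro x hx
    have htrivcx : ∀ m ∈ M₁, MonoidAlgebra.of k G (c x) • m = m := by
      intro m hm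
      have he : MonoidAlgebra.of k G (c x) • m =
          MonoidAlgebra.of k G g⁻¹ • (MonoidAlgebra.of k G x⁻¹ •
            (MonoidAlgebra.of k G g • (MonoidAlgebra.of k G x • m))) := by
        simp only [hc, map_mul, mul_smul]
      have h4 : MonoidAlgebra.of k G x⁻¹ • (MonoidAlgebra.of k G x • m) = m := by
        rw [smul_smul, ← map_mul, inv_mul_cancel, map_one, one_smul]
      rw [he, hgtriv _ (hsub x hx m hm), h4, hinvfix g m (hgtriv m hm)]
    exact Subtype.ext (lemA (c x) (hccen x) htrivcx)
  set n : ℕ := φ.ker.index with hn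
  have hn0 : n ≠ 0 := fun h => hfi (Nat.eq_zero_of_zero_dvd (h ▸ Subgroup.index_dvd_of_le hker))
  -- c x ^ n = 1 for every x
  have hcn : ∀ x : G, c x ^ n = 1 := by
    intro x
    have hxn : x ^ n ∈ φ.ker := by
      have h1 : (QuotientGroup.mk' φ.ker) (x ^ n) = 1 := by
        rw [map_pow]
        rw [hn, Subgroup.index_eq_card]
        exact pow_card_eq_one'
      rwa [← QuotientGroup.ker_mk' φ.ker, MonoidHom.mem_ker]
    have h2 : φ (x ^ n) = 1 := hxn
    rw [map_pow] at h2
    have h3 := congrArg (Subtype.val : Subgroup.center G → G) h2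
    have h4 : ((φ x : Subgroup.center G) : G) = c x := rfl
    simpa [h4] using h3
  -- g ^ n is central
  have hgn_cen : g ^ n ∈ Subgroup.center G := by
    rw [Subgroup.mem_center_iff]
    intro b
    have hcb : Commute g (c b) := Subgroup.mem_center_iff.mp (hccen b) g
    have e : b⁻¹ * g ^ n * b = g ^ n := by
      have e1 : b⁻¹ * g ^ n * b = (b⁻¹ * g * b) ^ n := by
        have := conj_pow (i := n) (a := b⁻¹) (b := g)
        simpa using this.symm
      rw [e1, hconj b, hcb.mul_pow, hcn b, mul_one]
    conv_lhs => rw [← e]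
    group
  -- g ^ n acts trivially on M₁
  have hgn_triv : ∀ m ∈ M₁, MonoidAlgebra.of k G (g ^ n) • m = m := by
    intro m hm
    rw [map_pow]
    induction n with
    | zero => simp
    | succ j ih => rw [pow_succ, mul_smul, hgtriv m hm, ih]
  have hgn1 : g ^ n = 1 := lemA _ hgn_cen hgn_triv
  have hfin : IsOfFinOrder g :=
    isOfFinOrder_iff_pow_eq_one.mpr ⟨n, Nat.pos_of_ne_zero hn0, hgn1⟩
  exact lemA g (htor g hfin) hgtriv
end

section
/- Let G be an abelian group, H a dense subgroup of G, and k a field. Then the group algebra kG is integral over the subalgebra kH, and a prime ideal P of kG is a maximal ideal if and only if P ∩ kH is a maximal ideal of kH. -/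
universe u v w

theorem stmt_14 (k : Type*) [Field k] (G : Type*) [CommGroup G] (H : Subgroup G)
    (hdense : ∀ g : G, ∃ n : ℕ, 0 < n ∧ g ^ n ∈ H) :
    (MonoidAlgebra.mapDomainRingHom k H.subtype).IsIntegral ∧
    ∀ P : Ideal (MonoidAlgebra k G), P.IsPrime →
      (P.IsMaximal ↔
        (Ideal.comap (MonoidAlgebra.mapDomainRingHom k H.subtype) P).IsMaximal) := by
  set f := MonoidAlgebra.mapDomainRingHom k H.subtype with hf
  have key : ∀ (h : H) (a : k), f (MonoidAlgebra.single h a)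
      = MonoidAlgebra.single (h : G) a := by
    intro h a
    simp [f, MonoidAlgebra.mapDomainRingHom, Finsupp.mapDomain_single]
  have hint : f.IsIntegral := by
    have hof : ∀ g : G, f.IsIntegralElem (MonoidAlgebra.of k G g) := by
      intro g
      obtain ⟨n, hn, hgn⟩ := hdense g
      refine ⟨Polynomial.X ^ n - Polynomial.C (MonoidAlgebra.of k H ⟨g ^ n, hgn⟩),
        Polynomial.monic_X_pow_sub_C _ hn.ne', ?_⟩
      simp [MonoidAlgebra.of_apply, key, MonoidAlgebra.single_pow]
    have hC : ∀ a : k, f.IsIntegralElem (MonoidAlgebra.single (1 : G) a) := by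
      intro a
      refine ⟨Polynomial.X - Polynomial.C (MonoidAlgebra.single (1 : H) a),
        Polynomial.monic_X_sub_C _, ?_⟩
      simp [key]
    intro x
    induction x using MonoidAlgebra.induction_on with
    | of g => exact hof g
    | add x y hx hy => exact hx.add f hy
    | smul a x hx =>
        have : a • x = MonoidAlgebra.single (1 : G) a * x := by
          rw [Algebra.smul_def, MonoidAlgebra.coe_algebraMap]; rfl
        rw [this]; exact (hC a).mul f hx
  refine ⟨hint, fun P hP => ⟨fun hPmax => ?_, fun hmax => ?_⟩⟩
  · exact Ideal.isMaximal_comap_of_isIntegral_of_isMaximal' f hint P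
  · exact Ideal.isMaximal_of_isIntegral_of_isMaximal_comap' f hint P hmax
end

section
/- Let G be an abelian group, H a dense subgroup of G, and k a field. If P and P₁ are ideals of the group algebra kG with P prime, P ⊆ P₁, and P ∩ kH = P₁ ∩ kH, then P = P₁. -/
universe u v w

theorem stmt_15 (k : Type*) [Field k] (G : Type*) [CommGroup G] (H : Subgroup G)
    (hdense : ∀ g : G, ∃ n : ℕ, 0 < n ∧ g ^ n ∈ H)
    (P P₁ : Ideal (MonoidAlgebra k G)) (hP : P.IsPrime) (hle : P ≤ P₁)
    (hcap : Ideal.comap (MonoidAlgebra.mapDomainRingHom k H.subtype) P =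
      Ideal.comap (MonoidAlgebra.mapDomainRingHom k H.subtype) P₁) :
    P = P₁ := by
  letI : Algebra (MonoidAlgebra k ↥H) (MonoidAlgebra k G) :=
    (MonoidAlgebra.mapDomainRingHom k H.subtype).toAlgebra
  have halg : algebraMap (MonoidAlgebra k ↥H) (MonoidAlgebra k G) =
      MonoidAlgebra.mapDomainRingHom k H.subtype := rfl
  -- every element of kG is integral over kH
  have hint : ∀ x : MonoidAlgebra k G, IsIntegral (MonoidAlgebra k ↥H) x := by
    intro x
    have hmem : x ∈ integralClosure (MonoidAlgebra k ↥H) (MonoidAlgebra k G) := by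
      have hx : x = x.coeff.sum (fun g c => MonoidAlgebra.single g c) :=
        (MonoidAlgebra.sum_coeff_single x).symm
      rw [hx, Finsupp.sum]
      refine sum_mem (fun g _ => ?_)
      obtain ⟨n, hn0, hnH⟩ := hdense g
      refine ⟨Polynomial.X ^ n - Polynomial.C
        (MonoidAlgebra.single (⟨g ^ n, hnH⟩ : H) (x.coeff g ^ n)), ?_, ?_⟩
      · exact Polynomial.monic_X_pow_sub_C _ hn0.ne'
      · simp only [Polynomial.eval₂_sub, Polynomial.eval₂_X_pow, Polynomial.eval₂_C, halg,
          MonoidAlgebra.single_pow, sub_eq_zero]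
        show _ = MonoidAlgebra.mapDomain H.subtype _
        rw [MonoidAlgebra.mapDomain_single]
        rfl
    exact hmem
  by_contra hne
  have hlt : P < P₁ := lt_of_le_of_ne hle hne
  obtain ⟨x, hx1, hx2⟩ := SetLike.exists_of_lt hlt
  have := Ideal.comap_lt_comap_of_integral_mem_sdiff (R := MonoidAlgebra k ↥H)
    hle ⟨hx1, hx2⟩ (hint x)
  rw [halg, hcap] at this
  exact lt_irrefl _ this
end

section
/- Let k be a field, G an abelian group, and H a subgroup of G. Let I be a proper ideal of the group algebra kG such that I = (I ∩ kH)·kG (the ideal of kG generated by I ∩ kH). If X is a subgroup of G with X ∩ H = 1, then kX ∩ I = 0, and consequently the quotient ring kG/I contains a subring isomorphic to kX. -/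
universe u v w

open Classical in
/-- Projection of a group-algebra element to the coset `H * g`. -/
noncomputable def cosetProj {k : Type*} [Field k] {G : Type*} [CommGroup G] (H : Subgroup G)
    (g : G) (f : MonoidAlgebra k G) : MonoidAlgebra k G :=
  MonoidAlgebra.ofCoeff (Finsupp.filter (fun y => y * g⁻¹ ∈ H) f.coeff)

open Classical in
theorem cosetProj_apply {k : Type*} [Field k] {G : Type*} [CommGroup G] (H : Subgroup G)
    (g : G) (f : MonoidAlgebra k G) (w : G) :
    (cosetProj H g f).coeff w = if w * g⁻¹ ∈ H then f.coeff w else 0 := by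
  rw [cosetProj, MonoidAlgebra.coeff_ofCoeff, Finsupp.filter_apply]

theorem cosetProj_add {k : Type*} [Field k] {G : Type*} [CommGroup G] (H : Subgroup G)
    (g : G) (f f' : MonoidAlgebra k G) :
    cosetProj H g (f + f') = cosetProj H g f + cosetProj H g f' := by
  classical
  simp only [cosetProj]
  rw [MonoidAlgebra.coeff_add, Finsupp.filter_add]; rfl

theorem cosetProj_single_mul {k : Type*} [Field k] {G : Type*} [CommGroup G] (H : Subgroup G)
    (g z : G) (d : k) (f : MonoidAlgebra k G) :
    cosetProj H g (MonoidAlgebra.single z d * f)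
      = MonoidAlgebra.single z d * cosetProj H (z⁻¹ * g) f := by
  classical
  ext w
  rw [cosetProj_apply, MonoidAlgebra.single_mul_apply, MonoidAlgebra.single_mul_apply,
    cosetProj_apply]
  have : (z⁻¹ * w) * (z⁻¹ * g)⁻¹ = w * g⁻¹ := by
    simp [mul_inv_rev, mul_comm, mul_left_comm, mul_assoc]
  rw [this]
  split <;> simp

open Classical in
/-- projection of something supported in `H` -/
theorem cosetProj_of_support_subset {k : Type*} [Field k] {G : Type*} [CommGroup G]
    (H : Subgroup G) (g : G) (f : MonoidAlgebra k G) (hf : ∀ w ∈ f.coeff.support, w ∈ H) :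
    cosetProj H g f = if g ∈ H then f else 0 := by
  ext w
  rw [cosetProj_apply]
  by_cases hw : w ∈ f.coeff.support
  · have hwH := hf w hw
    have h1 : (w * g⁻¹ ∈ H) ↔ g ∈ H := by
      constructor
      · intro h
        have := H.mul_mem (H.inv_mem hwH) h
        rw [inv_mul_cancel_left] at this
        exact (inv_mem_iff).mp this
      · intro h
        exact H.mul_mem hwH (H.inv_mem h)
    rw [h1]
    by_cases hg : g ∈ H <;> simp [hg]
  · rw [Finsupp.notMem_support_iff] at hw
    rw [hw]
    by_cases hg : g ∈ H <;> simp [hg, hw]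

theorem cosetProj_mem {k : Type*} [Field k] {G : Type*} [CommGroup G] {H : Subgroup G}
    {I : Ideal (MonoidAlgebra k G)}
    (hctrl : Ideal.map (MonoidAlgebra.mapDomainRingHom k H.subtype)
      (Ideal.comap (MonoidAlgebra.mapDomainRingHom k H.subtype) I) = I)
    {y : MonoidAlgebra k G} (hy : y ∈ I) (g : G) : cosetProj H g y ∈ I := by
  classical
  set ψ := MonoidAlgebra.mapDomainRingHom k H.subtype with hψ
  rw [← hctrl] at hy
  rw [Ideal.map] at hy
  -- span induction
  revert g
  refine Submodule.span_induction ?_ ?_ ?_ ?_ hy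
  · rintro x ⟨b, hb, rfl⟩ g
    have hsupp : ∀ w ∈ (ψ b).coeff.support, w ∈ H := by
      intro w hw
      have := Finsupp.mapDomain_support (f := H.subtype) (s := b.coeff) hw
      simp only [Finset.mem_image] at this
      obtain ⟨a, _, rfl⟩ := this
      exact a.2
    rw [cosetProj_of_support_subset H g (ψ b) hsupp]
    split
    · rw [← hctrl]; exact Ideal.mem_map_of_mem ψ hb
    · exact I.zero_mem
  · intro g
    have : cosetProj H g (0 : MonoidAlgebra k G) = 0 := by
      simp [cosetProj, Finsupp.filter_zero]
    rw [this]; exact I.zero_mem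
  · intro x y _ _ hx hy g
    rw [cosetProj_add]
    exact I.add_mem (hx g) (hy g)
  · intro c x _ hx
    have key : ∀ c : MonoidAlgebra k G, ∀ g, cosetProj H g (c * x) ∈ I := by
      intro c
      induction c using MonoidAlgebra.induction with
      | zero =>
        intro g
        have h0 : (0 : MonoidAlgebra k G) * x = 0 := by simp
        rw [h0]
        simp only [cosetProj, MonoidAlgebra.coeff_zero, Finsupp.filter_zero, MonoidAlgebra.ofCoeff_zero]
        exact I.zero_mem
      | single_add z d c' _ _ ih =>
        intro g
        rw [add_mul, cosetProj_add, cosetProj_single_mul]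
        exact I.add_mem (Ideal.mul_mem_left I _ (hx _)) (ih g)
    intro g
    rw [smul_eq_mul]
    exact key c g

theorem stmt_16_aux (k : Type*) [Field k] (G : Type*) [CommGroup G] (H X : Subgroup G)
    (I : Ideal (MonoidAlgebra k G)) (hproper : I ≠ ⊤)
    (hctrl : Ideal.map (MonoidAlgebra.mapDomainRingHom k H.subtype)
      (Ideal.comap (MonoidAlgebra.mapDomainRingHom k H.subtype) I) = I)
    (hX : X ⊓ H = ⊥) :
    Ideal.comap (MonoidAlgebra.mapDomainRingHom k X.subtype) I = ⊥ ∧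
    ∃ f : MonoidAlgebra k X →+* MonoidAlgebra k G ⧸ I, Function.Injective f := by
  classical
  set φ := MonoidAlgebra.mapDomainRingHom k X.subtype with hφ
  have hkey : Ideal.comap φ I = ⊥ := by
    rw [eq_bot_iff]
    intro a ha
    simp only [Ideal.mem_comap] at ha
    simp only [Submodule.mem_bot]
    have hzero : ∀ x : X, a.coeff x = 0 := by
      intro x
      by_contra hax
      -- the coset projection of φ a at ↑x is single ↑x (a x)
      have hc : cosetProj H (↑x) (φ a) = MonoidAlgebra.single (↑x : G) (a.coeff x) := by
        ext w
        rw [cosetProj_apply]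
        have hφa : (φ a).coeff = Finsupp.mapDomain X.subtype a.coeff := rfl
        by_cases hw : w ∈ Set.range X.subtype
        · obtain ⟨x', rfl⟩ := hw
          rw [hφa, Finsupp.mapDomain_apply X.subtype_injective]
          rw [Subgroup.coe_subtype]
          have hiff : ((x' : G) * (↑x : G)⁻¹ ∈ H) ↔ x' = x := by
            constructor
            · intro hmem
              have h1 : ((x' * x⁻¹ : X) : G) ∈ H := by
                simpa using hmem
              have h2 : ((x' * x⁻¹ : X) : G) ∈ X ⊓ H := ⟨(x' * x⁻¹ : X).2, h1⟩
              rw [hX, Subgroup.mem_bot] at h2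
              have h3 : (x' * x⁻¹ : X) = 1 := Subtype.ext h2
              have := mul_inv_eq_one.mp h3
              exact this
            · rintro rfl
              simpa using H.one_mem
          rw [MonoidAlgebra.coeff_single, Finsupp.single_apply]
          by_cases hx' : x' = x
          · subst hx'
            rw [if_pos (hiff.mpr rfl), if_pos rfl]
          · rw [if_neg (fun h => hx' (hiff.mp h)),
              if_neg (fun h => hx' (Subtype.ext h.symm))]
        · rw [hφa, Finsupp.mapDomain_notin_range _ _ hw]
          have hne : (↑x : G) ≠ w := fun h => hw ⟨x, h⟩
          rw [MonoidAlgebra.coeff_single, Finsupp.single_apply, if_neg hne]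
          split <;> rfl
      have hmem : MonoidAlgebra.single (↑x : G) (a.coeff x) ∈ I := by
        rw [← hc]
        exact cosetProj_mem hctrl ha _
      have hone : (1 : MonoidAlgebra k G) ∈ I := by
        have := Ideal.mul_mem_left I (MonoidAlgebra.single ((↑x : G))⁻¹ (a.coeff x)⁻¹) hmem
        rwa [MonoidAlgebra.single_mul_single, inv_mul_cancel, inv_mul_cancel₀ hax,
          ← MonoidAlgebra.one_def] at this
      exact hproper (Ideal.eq_top_iff_one I |>.mpr hone)
    exact MonoidAlgebra.ext (Finsupp.ext fun x => by rw [hzero x]; rfl)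
  refine ⟨hkey, (Ideal.Quotient.mk I).comp φ, ?_⟩
  intro a b hab
  simp only [RingHom.comp_apply, Ideal.Quotient.mk_eq_mk_iff_sub_mem] at hab
  rw [← map_sub] at hab
  have : a - b ∈ Ideal.comap φ I := hab
  rw [hkey, Submodule.mem_bot] at this
  exact sub_eq_zero.mp this

theorem stmt_16 (k : Type*) [Field k] (G : Type*) [CommGroup G] (H X : Subgroup G)
    (I : Ideal (MonoidAlgebra k G)) (hproper : I ≠ ⊤)
    (hctrl : Ideal.map (MonoidAlgebra.mapDomainRingHom k H.subtype)
      (Ideal.comap (MonoidAlgebra.mapDomainRingHom k H.subtype) I) = I)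
    (hX : X ⊓ H = ⊥) :
    Ideal.comap (MonoidAlgebra.mapDomainRingHom k X.subtype) I = ⊥ ∧
    ∃ f : MonoidAlgebra k X →+* MonoidAlgebra k G ⧸ I, Function.Injective f := by
  exact stmt_16_aux k G H X I hproper hctrl hX
end

section
/- Let G be an abelian group with torsion subgroup T and let H be a finitely generated subgroup of G. If the set of primes p for which T contains an element of order p is infinite, then there is a nontrivial subgroup X of T such that X ∩ H = 1. -/
universe u v w

theorem stmt_17 (G : Type*) [CommGroup G] (H : Subgroup G) (hH : H.FG)
    (hinf : {p : ℕ | p.Prime ∧ ∃ x : G, orderOf x = p}.Infinite) :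
    ∃ X : Subgroup G, X ≠ ⊥ ∧ X ≤ CommGroup.torsion G ∧ X ⊓ H = ⊥ := by
  classical
  -- H is a finitely generated abelian group
  haveI hHfg : Group.FG ↥H := (Group.fg_iff_subgroup_fg H).2 hH
  haveI : Module.Finite ℤ (Additive ↥H) := Module.Finite.iff_addGroup_fg.mpr inferInstance
  -- torsion subgroup of H
  set K : Subgroup ↥H := CommGroup.torsion ↥H with hK
  -- K is finitely generated (Noetherian argument)
  have hKfg : K.FG := by
    have h1 : (K.toAddSubgroup.toIntSubmodule : Submodule ℤ (Additive ↥H)).FG :=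
      IsNoetherian.noetherian _
    rw [Submodule.fg_iff_addSubgroup_fg, AddSubgroup.toIntSubmodule_toAddSubgroup] at h1
    exact (Subgroup.fg_iff_add_fg K).2 h1
  haveI : Group.FG ↥K := (Group.fg_iff_subgroup_fg K).2 hKfg
  -- K is a torsion group
  have hKtor : Monoid.IsTorsion ↥K := fun x => by
    have hx : IsOfFinOrder (x : ↥H) := x.2
    have h2 := hx.orderOf_pos
    rw [Subgroup.orderOf_coe] at h2
    exact orderOf_pos_iff.1 h2
  haveI hKfin : Finite ↥K := CommGroup.finite_of_fg_torsion (G := ↥K) hKtor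
  -- the set of prime orders of elements of H is finite
  set S : Set ℕ := {p : ℕ | p.Prime ∧ ∃ h : ↥H, orderOf h = p} with hS
  have hSfin : S.Finite := by
    rw [← Set.finite_coe_iff]
    have : ∀ p : S, ∃ y : ↥K, orderOf (y : ↥H) = (p : ℕ) := by
      rintro ⟨p, hp, h, hh⟩
      have hfin : IsOfFinOrder h := by
        rw [← orderOf_pos_iff, hh]; exact hp.pos
      exact ⟨⟨h, hfin⟩, hh⟩
    choose f hf using this
    have hinj : Function.Injective f := by
      intro a b hab
      have := hf a
      rw [hab, hf b] at this
      exact Subtype.ext this.symm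
    exact Finite.of_injective f hinj
  -- choose a prime p with an element of order p in G but not in S
  obtain ⟨p, hp, hpS⟩ := (hinf.diff hSfin).nonempty
  obtain ⟨hpp, x, hx⟩ := hp
  refine ⟨Subgroup.zpowers x, ?_, ?_, ?_⟩
  · -- nontrivial
    intro hbot
    have hx1 : x = 1 := by
      have : x ∈ (⊥ : Subgroup G) := hbot ▸ Subgroup.mem_zpowers x
      exact Subgroup.mem_bot.1 this
    rw [hx1, orderOf_one] at hx
    exact hpp.ne_one hx.symm
  · -- contained in the torsion subgroup
    refine Subgroup.zpowers_le.2 ?_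
    rw [CommGroup.mem_torsion, ← orderOf_pos_iff, hx]
    exact hpp.pos
  · -- trivial intersection with H
    rw [eq_bot_iff]
    rintro y ⟨hyX, hyH⟩
    obtain ⟨m, rfl⟩ := hyX
    rw [Subgroup.mem_bot]
    by_contra hy1
    -- (x^m) has order p
    have hpow : (x ^ m) ^ p = 1 := by
      rw [← zpow_natCast, ← zpow_mul, mul_comm, zpow_mul, zpow_natCast, ← hx,
        pow_orderOf_eq_one, one_zpow]
    have hdvd : orderOf (x ^ m) ∣ p := orderOf_dvd_of_pow_eq_one hpow
    have hord : orderOf (x ^ m) = p := by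
      rcases (Nat.Prime.eq_one_or_self_of_dvd hpp _ hdvd) with h1 | h1
      · exact absurd (orderOf_eq_one_iff.1 h1) hy1
      · exact h1
    exact hpS ⟨hpp, ⟨x ^ m, hyH⟩, by rw [Subgroup.orderOf_mk, hord]⟩
end

section
/- Let G be an abelian group with torsion subgroup T and let H be a finitely generated subgroup of G. If the torsion-free quotient group G/T does not have finite Prüfer rank (i.e. for every m there is a finitely generated subgroup of G/T that cannot be generated by m elements), then there is a subgroup Y of G which is free abelian of countably infinite rank such that Y ∩ H = 1. -/
universe u v w

lemma bridge_toAdd {Q : Type*} [CommGroup Q] {u : Set Q} {x : Q}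
    (hx : x ∈ Subgroup.closure u) :
    Additive.ofMul x ∈ Submodule.span ℤ (Additive.ofMul '' u) := by
  induction hx using Subgroup.closure_induction with
  | mem y hy => exact Submodule.subset_span ⟨y, hy, rfl⟩
  | one => exact Submodule.zero_mem _
  | mul y z _ _ hy hz => exact Submodule.add_mem _ hy hz
  | inv y _ hy => exact Submodule.neg_mem _ hy

lemma bridge_toMul {Q : Type*} [CommGroup Q] {v : Set (Additive Q)} {a : Additive Q}
    (ha : a ∈ Submodule.span ℤ v) :
    Additive.toMul a ∈ Subgroup.closure (Additive.toMul '' v) := by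
  induction ha using Submodule.span_induction with
  | mem y hy => exact Subgroup.subset_closure ⟨y, hy, rfl⟩
  | zero => exact Subgroup.one_mem _
  | add y z _ _ hy hz => exact Subgroup.mul_mem _ hy hz
  | smul n y _ hy => exact Subgroup.zpow_mem _ hy n

lemma torsionfree_noZeroSMul {Q : Type*} [CommGroup Q] (h : ∀ g : Q, g ≠ 1 → ¬IsOfFinOrder g) :
    NoZeroSMulDivisors ℤ (Additive Q) := by
  constructor
  intro n x hnx
  by_contra hcon
  push_neg at hcon
  obtain ⟨hn, hx⟩ := hcon
  have hfin : IsOfFinOrder (Additive.toMul x) :=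
    isOfFinOrder_iff_zpow_eq_one.mpr ⟨n, hn, by
      have : Additive.toMul (n • x) = Additive.toMul (0 : Additive Q) := by rw [hnx]
      simpa using this⟩
  exact h (Additive.toMul x) (by simpa using hx) hfin

lemma exists_indep (Q : Type*) [CommGroup Q] (htf : ∀ g : Q, g ≠ 1 → ¬IsOfFinOrder g)
    (hrank : ¬ HasFinitePruferRank Q) (s : Finset (Additive Q)) :
    ∃ a : Additive Q, ∀ n : ℤ, n ≠ 0 → n • a ∉ Submodule.span ℤ (s : Set (Additive Q)) := by
  classical
  by_contra hcon
  push_neg at hcon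
  apply hrank
  haveI := torsionfree_noZeroSMul htf
  refine ⟨s.card, fun S hS => ?_⟩
  set S' : Submodule ℤ (Additive Q) :=
    AddSubgroup.toIntSubmodule (Subgroup.toAddSubgroup S) with hS'def
  have hfg : S'.FG := by
    rw [Submodule.fg_iff_addSubgroup_fg]
    have := (Subgroup.fg_iff_add_fg S).mp hS
    exact this
  haveI : Module.Finite ℤ S' := Module.Finite.iff_fg.mpr hfg
  haveI : Module.Free ℤ S' := inferInstance
  let b := Module.Free.chooseBasis ℤ S'
  set ι := Module.Free.ChooseBasisIndex ℤ S'
  -- for each i, pick nonzero n i with n i • b i ∈ span ℤ s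
  have hni : ∀ i : ι, ∃ n : ℤ, n ≠ 0 ∧ n • ((b i : Additive Q)) ∈
      Submodule.span ℤ (s : Set (Additive Q)) := fun i => hcon (b i)
  choose n hn0 hnmem using hni
  -- independence of the coerced basis
  have hv : LinearIndependent ℤ (fun i : ι => ((b i : Additive Q))) :=
    b.linearIndependent.map' S'.subtype (Submodule.ker_subtype S')
  have hv2 : LinearIndependent ℤ (fun i : ι => n i • ((b i : Additive Q))) := by
    rw [Fintype.linearIndependent_iff] at hv ⊢
    intro c hc i
    have : ∀ j, (c j * n j) = 0 := by
      apply hv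
      rw [← hc]
      refine Finset.sum_congr rfl fun j _ => ?_
      rw [mul_smul]
    rcases mul_eq_zero.mp (this i) with h | h
    · exact h
    · exact absurd h (hn0 i)
  -- put the family inside span ℤ s
  let w : ι → Submodule.span ℤ (s : Set (Additive Q)) := fun i => ⟨_, hnmem i⟩
  have hw : LinearIndependent ℤ w :=
    LinearIndependent.of_comp (Submodule.span ℤ (s : Set (Additive Q))).subtype hv2
  haveI : Module.Finite ℤ (Submodule.span ℤ (s : Set (Additive Q))) :=
    Module.Finite.iff_fg.mpr (Submodule.fg_span (s.finite_toSet))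
  have hcard : Fintype.card ι ≤ s.card := by
    refine (hw.fintype_card_le_finrank).trans ?_
    exact finrank_span_finset_le_card s
  -- the generating set
  let tQ : Finset Q := Finset.univ.image (fun i : ι => Additive.toMul ((b i : Additive Q)))
  have hmem : ∀ i : ι, Additive.toMul ((b i : Additive Q)) ∈ S := fun i => (b i).2
  have hspan : Submodule.span ℤ (Set.range (fun i : ι => ((b i : Additive Q)))) = S' := by
    have : (Set.range fun i : ι => ((b i : Additive Q))) =
        S'.subtype '' (Set.range b) := by
      rw [← Set.range_comp]; rfl
    rw [this, ← Submodule.map_span, b.span_eq, Submodule.map_top, Submodule.range_subtype]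
  refine ⟨tQ, ?_, ?_, ?_⟩
  · intro x hx
    simp only [tQ, Finset.coe_image, Set.mem_image] at hx
    obtain ⟨i, _, rfl⟩ := hx
    exact hmem i
  · calc tQ.card ≤ Finset.univ.card := Finset.card_image_le
      _ = Fintype.card ι := Finset.card_univ
      _ ≤ s.card := hcard
  · apply le_antisymm
    · rw [Subgroup.closure_le]
      intro x hx
      simp only [tQ, Finset.coe_image, Set.mem_image] at hx
      obtain ⟨i, _, rfl⟩ := hx
      exact hmem i
    · intro x hx
      have hx' : Additive.ofMul x ∈ S' := hx
      rw [← hspan] at hx'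
      have := bridge_toMul hx'
      have himg : Additive.toMul '' (Set.range fun i : ι => ((b i : Additive Q)))
          = (tQ : Set Q) := by
        simp only [tQ, Finset.coe_image, Finset.coe_univ, Set.image_univ, ← Set.range_comp]
        rfl
      rw [himg] at this
      exact this

lemma exists_good_seq {A : Type*} [AddCommGroup A]
    (hP : ∀ s : Finset A, ∃ a : A, ∀ n : ℤ, n ≠ 0 → n • a ∉ Submodule.span ℤ (s : Set A))
    (s0 : Finset A) :
    ∃ a : ℕ → A, ∀ c : ℕ →₀ ℤ,
      (c.sum fun i k => k • a i) ∈ Submodule.span ℤ (s0 : Set A) → c = 0 := by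
  classical
  choose f hf using hP
  have hgex : ∃ g : ℕ → Finset A, g 0 = s0 ∧ ∀ n, g (n + 1) = insert (f (g n)) (g n) :=
    ⟨fun n => Nat.rec s0 (fun _ prev => insert (f prev) prev) n, rfl, fun _ => rfl⟩
  obtain ⟨g, hg0, hgs⟩ := hgex
  set a : ℕ → A := fun n => f (g n) with hadef
  have ha : ∀ n, ∀ c : ℤ, c ≠ 0 → c • a n ∉ Submodule.span ℤ ((g n : Set A)) :=
    fun n => hf (g n)
  have hmono : ∀ {m n : ℕ}, m ≤ n → g m ⊆ g n := by
    intro m n hmn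
    induction hmn with
    | refl => exact Finset.Subset.refl _
    | step h ih => exact ih.trans (by rw [hgs]; exact Finset.subset_insert _ _)
  have hain : ∀ {i n : ℕ}, i < n → a i ∈ g n := by
    intro i n hin
    have : a i ∈ g (i + 1) := by rw [hgs]; exact Finset.mem_insert_self _ _
    exact hmono hin this
  have hs0 : ∀ n, s0 ⊆ g n := fun n => hg0 ▸ hmono (Nat.zero_le n)
  refine ⟨a, ?_⟩
  intro c hc
  by_contra hne
  have hsupp : c.support.Nonempty := Finsupp.support_nonempty_iff.mpr hne
  set N := c.support.max' hsupp with hNdef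
  have hNmem : N ∈ c.support := c.support.max'_mem hsupp
  have hcN : c N ≠ 0 := Finsupp.mem_support_iff.mp hNmem
  have hsplit : c N • a N + ∑ i ∈ c.support.erase N, c i • a i =
      ∑ i ∈ c.support, c i • a i := Finset.add_sum_erase _ (fun i => c i • a i) hNmem
  have hrest : ∑ i ∈ c.support.erase N, c i • a i ∈
      Submodule.span ℤ ((g N : Set A)) := by
    refine Submodule.sum_mem _ fun i hi => Submodule.smul_mem _ _ (Submodule.subset_span ?_)
    have hiN : i < N := lt_of_le_of_ne (c.support.le_max' i (Finset.mem_of_mem_erase hi))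
      (Finset.ne_of_mem_erase hi)
    exact hain hiN
  have hsum : (∑ i ∈ c.support, c i • a i) ∈ Submodule.span ℤ ((g N : Set A)) := by
    refine Submodule.span_mono ?_ hc
    exact_mod_cast hs0 N
  have hfin : c N • a N ∈ Submodule.span ℤ ((g N : Set A)) := by
    have := Submodule.sub_mem _ hsum hrest
    rwa [← hsplit, add_sub_cancel_right] at this
  exact ha N (c N) hcN hfin

theorem stmt_18 (G : Type*) [CommGroup G] (H : Subgroup G) (hH : H.FG)
    (hrank : ¬ HasFinitePruferRank (G ⧸ CommGroup.torsion G)) :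
    ∃ Y : Subgroup G, Nonempty (Additive Y ≃+ (ℕ →₀ ℤ)) ∧ Y ⊓ H = ⊥ := by
  classical
  obtain ⟨t, ht⟩ := hH
  have htf : ∀ g : (G ⧸ CommGroup.torsion G), g ≠ 1 → ¬IsOfFinOrder g :=
    fun g hg => isMulTorsionFree_iff_not_isOfFinOrder.mp inferInstance hg
  set Q := G ⧸ CommGroup.torsion G with hQdef
  let π : G →* Q := QuotientGroup.mk' (CommGroup.torsion G)
  let s0 : Finset (Additive Q) := t.image (fun x => Additive.ofMul (π x))
  obtain ⟨a, K⟩ := exists_good_seq (exists_indep Q htf hrank) s0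
  -- lift the sequence to G
  have lift : ∀ n, ∃ x : G, Additive.ofMul (π x) = a n := by
    intro n
    obtain ⟨x, hx⟩ := QuotientGroup.mk'_surjective (CommGroup.torsion G) (Additive.toMul (a n))
    exact ⟨x, by simp [π, hx]⟩
  choose gg hgg using lift
  -- the free abelian subgroup
  let F : (ℕ →₀ ℤ) →ₗ[ℤ] Additive G :=
    Finsupp.linearCombination ℤ (fun n => Additive.ofMul (gg n))
  let πL : Additive G →ₗ[ℤ] Additive Q := (MonoidHom.toAdditive π).toIntLinearMap
  have hπF : ∀ c : ℕ →₀ ℤ, πL (F c) = c.sum fun i k => k • a i := by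
    intro c
    rw [Finsupp.linearCombination_apply, map_finsuppSum]
    refine Finsupp.sum_congr fun i _ => ?_
    rw [map_smul]
    congr 1
    exact hgg i
  have hker : ∀ c : ℕ →₀ ℤ, F c = 0 → c = 0 := by
    intro c hc
    apply K
    have h0 : πL (F c) = 0 := by rw [hc, map_zero]
    rw [hπF] at h0
    rw [h0]
    exact Submodule.zero_mem _
  have hinj : Function.Injective F := by
    intro c d hcd
    have : c - d = 0 := hker _ (by rw [map_sub, hcd, sub_self])
    exact sub_eq_zero.mp this
  let Y : Subgroup G := AddSubgroup.toSubgroup' (LinearMap.range F).toAddSubgroup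
  have hY : ∀ x : G, x ∈ Y ↔ Additive.ofMul x ∈ LinearMap.range F := fun x => Iff.rfl
  refine ⟨Y, ⟨?_⟩, ?_⟩
  · -- Additive Y ≃+ (ℕ →₀ ℤ)
    let e1 : (ℕ →₀ ℤ) ≃ₗ[ℤ] LinearMap.range F := LinearEquiv.ofInjective F hinj
    let e2 : Additive ↥Y ≃+ ↥(LinearMap.range F) :=
      { toFun := fun x => ⟨Additive.ofMul ((Additive.toMul x : ↥Y) : G),
          (hY _).mp (Additive.toMul x).2⟩
        invFun := fun y => Additive.ofMul (⟨Additive.toMul y.1, (hY _).mpr y.2⟩ : ↥Y)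
        left_inv := fun x => rfl
        right_inv := fun y => rfl
        map_add' := fun x y => rfl }
    exact e2.trans e1.symm.toAddEquiv
  · -- Y ⊓ H = ⊥
    rw [eq_bot_iff]
    intro x hx
    rw [Subgroup.mem_inf] at hx
    obtain ⟨hxY, hxH⟩ := hx
    obtain ⟨c, hc⟩ := (hY x).mp hxY
    have h1 : π x ∈ Subgroup.closure (π '' (t : Set G)) := by
      rw [← MonoidHom.map_closure, ht]
      exact Subgroup.mem_map_of_mem π hxH
    have h2 : Additive.ofMul (π x) ∈ Submodule.span ℤ ((s0 : Set (Additive Q))) := by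
      have hb := bridge_toAdd h1
      have himg : Additive.ofMul '' (π '' (t : Set G)) = (s0 : Set (Additive Q)) := by
        rw [Set.image_image]
        simp [s0, Finset.coe_image]
      rwa [himg] at hb
    have h3 : πL (F c) = Additive.ofMul (π x) := by rw [hc]; rfl
    have hc0 : c = 0 := by
      apply K
      rw [← hπF, h3]
      exact h2
    rw [hc0, map_zero] at hc
    have hx1 : x = 1 := by
      have := congrArg Additive.toMul hc
      simpa using this.symm
    simp [hx1, Subgroup.mem_bot]
end

section
/- Let G be a nilpotent group of nilpotency class at most 2 and let Y be a subgroup of G whose normalizer N_G(Y) has finite index in G. Then there exist a positive integer n and a normal subgroup Ȳ of G such that Yⁿ ≤ Ȳ ≤ Y, where Yⁿ denotes the subgroup of Y generated by {yⁿ : y ∈ Y}. -/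
universe u v w

open scoped commutatorElement

theorem stmt_19 (G : Type*) [Group G]
    (hnil : commutator G ≤ Subgroup.center G)
    (Y : Subgroup G) (hfi : (Subgroup.normalizer (Y : Set G)).index ≠ 0) :
    ∃ n : ℕ, 0 < n ∧ ∃ Ybar : Subgroup G, Ybar.Normal ∧
      Subgroup.closure ((· ^ n) '' (Y : Set G)) ≤ Ybar ∧ Ybar ≤ Y := by
  classical
  set m := (Subgroup.normalizer (Y : Set G)).index with hm
  refine ⟨m, Nat.pos_of_ne_zero hfi, ?_⟩
  have hc : ∀ a b : G, ⁅a, b⁆ ∈ Subgroup.center G := fun a b =>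
    hnil (Subgroup.commutator_mem_commutator (Subgroup.mem_top a) (Subgroup.mem_top b))
  have hcomm : ∀ a b x : G, x * ⁅a, b⁆ = ⁅a, b⁆ * x := fun a b x =>
    (Subgroup.mem_center_iff.mp (hc a b)) x
  have hA : ∀ a b y : G, ⁅a * b, y⁆ = ⁅a, y⁆ * ⁅b, y⁆ := by
    intro a b y
    calc ⁅a * b, y⁆ = a * (b * y * b⁻¹ * y⁻¹ * y) * a⁻¹ * y⁻¹ := by
          rw [commutatorElement_def]; group
      _ = a * ⁅b, y⁆ * (y * a⁻¹ * y⁻¹) := by rw [commutatorElement_def]; group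
      _ = ⁅b, y⁆ * (a * y * a⁻¹ * y⁻¹) := by
          rw [hcomm b y a]; group
      _ = ⁅b, y⁆ * ⁅a, y⁆ := by rw [commutatorElement_def a y]
      _ = ⁅a, y⁆ * ⁅b, y⁆ := (hcomm b y _).symm
  have hB : ∀ g y1 y2 : G, ⁅g, y1 * y2⁆ = ⁅g, y1⁆ * ⁅g, y2⁆ := by
    intro g y1 y2
    have h0 : ⁅g, y1 * y2⁆ = ⁅y1 * y2, g⁆⁻¹ := by rw [commutatorElement_inv]
    rw [h0, hA, mul_inv_rev, commutatorElement_inv, commutatorElement_inv]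
    exact (hcomm g y2 _).symm
  have hApow : ∀ a y : G, ∀ k : ℕ, ⁅a ^ k, y⁆ = ⁅a, y⁆ ^ k := by
    intro a y k
    induction k with
    | zero => simp [commutatorElement_def]
    | succ n ih => rw [pow_succ, hA, ih, pow_succ]
  have hBpow : ∀ a y : G, ∀ k : ℕ, ⁅a, y ^ k⁆ = ⁅a, y⁆ ^ k := by
    intro a y k
    induction k with
    | zero => simp [commutatorElement_def]
    | succ n ih => rw [pow_succ, hB, ih, pow_succ]
  have key : ∀ y ∈ Y, ∀ g : G, g * y ^ m * g⁻¹ ∈ Y := by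
    intro y hy g
    let φ : G →* Subgroup.center G :=
      { toFun := fun g => ⟨⁅g, y⁆, hc g y⟩
        map_one' := Subtype.ext (by simp [commutatorElement_def])
        map_mul' := fun a b => Subtype.ext (hA a b y) }
    let P : Subgroup ↥(Subgroup.center G) := Y.comap (Subgroup.center G).subtype
    haveI hPn : P.Normal := by
      constructor
      intro n hn g
      have hfix : g * n * g⁻¹ = n := Subtype.ext (by
        have hcen := (Subgroup.mem_center_iff.mp n.2) (g : G)
        push_cast
        rw [hcen]; group)
      rw [hfix]; exact hn
    let ψ : G →* ↥(Subgroup.center G) ⧸ P := (QuotientGroup.mk' P).comp φ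
    have hNker : Subgroup.normalizer (Y : Set G) ≤ ψ.ker := by
      intro g hg
      rw [MonoidHom.mem_ker]
      show (QuotientGroup.mk' P) (φ g) = 1
      rw [QuotientGroup.mk'_apply, QuotientGroup.eq_one_iff]
      show ⁅g, y⁆ ∈ Y
      have hgyg : g * y * g⁻¹ ∈ Y := (Subgroup.mem_normalizer_iff.mp hg y).mp hy
      rw [commutatorElement_def]
      exact Subgroup.mul_mem _ hgyg (Subgroup.inv_mem _ hy)
    have hdvd : ψ.ker.index ∣ m := Subgroup.index_dvd_of_le hNker
    haveI : ψ.ker.FiniteIndex := by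
      constructor
      intro h0
      exact hfi (Nat.eq_zero_of_zero_dvd (h0 ▸ hdvd))
    have hgm : g ^ m ∈ ψ.ker := by
      obtain ⟨c, hc'⟩ := hdvd
      rw [hc', pow_mul]
      exact Subgroup.pow_mem _ (Subgroup.pow_index_mem ψ.ker g) c
    have h1 : ⁅g, y ^ m⁆ ∈ Y := by
      rw [MonoidHom.mem_ker] at hgm
      have hP : φ (g ^ m) ∈ P := by
        rw [← QuotientGroup.eq_one_iff (φ (g ^ m))]
        exact hgm
      have h2 : ⁅g ^ m, y⁆ ∈ Y := hP
      rw [hApow] at h2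
      rw [hBpow]
      exact h2
    have heq : g * y ^ m * g⁻¹ = ⁅g, y ^ m⁆ * y ^ m := by
      rw [commutatorElement_def]; group
    rw [heq]
    exact Subgroup.mul_mem _ h1 (Subgroup.pow_mem _ hy m)
  refine ⟨Subgroup.normalClosure ((· ^ m) '' (Y : Set G)),
    Subgroup.normalClosure_normal, ?_, ?_⟩
  · exact Subgroup.closure_le_normalClosure
  · rw [Subgroup.normalClosure, Subgroup.closure_le]
    intro x hx
    rw [Group.mem_conjugatesOfSet_iff] at hx
    obtain ⟨a, ⟨yy, hyy, rfl⟩, hconj⟩ := hx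
    obtain ⟨cc, hcc⟩ := isConj_iff.mp hconj
    rw [← hcc]
    exact key yy hyy cc
end
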